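/- An oriented graph is a Q-graph if and only if it is a global Q-graph. -/

import Mathlib

namespace PluralCuts

/-- The two horizontal directions: west and east. -/
inductive XDir : Type
  | W
  | E
deriving DecidableEq

/-- The two vertical directions: north and south. -/
inductive YDir : Type
  | N
  | S
deriving DecidableEq

/-- The other element of `{W, E}`. -/
def XDir.other : XDir → XDir
  | .W => .E
  | .E => .W

/-- A helper choosing between two values according to an `XDir`. -/
def pick {α : Type*} (w e : α) : XDir → α
  | .W => w
  | .E => e

/-- A digraph on (a finite set of) natural-number vertices: a finite set of
vertices together with a finite set of edges (ordered pairs). -/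
structure DG : Type where
  verts : Finset ℕ
  edges : Finset (ℕ × ℕ)

namespace DG

/-- `D` is an oriented graph: edges lie between vertices, the edge relation is
irreflexive and antisymmetric, and the vertex set is nonempty. -/
def IsOriented (D : DG) : Prop :=
  (∀ e ∈ D.edges, e.1 ∈ D.verts ∧ e.2 ∈ D.verts) ∧
  (∀ e ∈ D.edges, e.1 ≠ e.2) ∧
  (∀ a b : ℕ, (a, b) ∈ D.edges → (b, a) ∉ D.edges) ∧
  D.verts.Nonempty

/-- A `W`-vertex: no edge ends in it. -/
def isWVert (D : DG) (a : ℕ) : Prop := a ∈ D.verts ∧ ∀ b, (b, a) ∉ D.edges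

/-- An `E`-vertex: no edge begins in it. -/
def isEVert (D : DG) (a : ℕ) : Prop := a ∈ D.verts ∧ ∀ b, (a, b) ∉ D.edges

/-- An inner vertex: some edge ends in it and some edge begins in it. -/
def isInner (D : DG) (a : ℕ) : Prop :=
  a ∈ D.verts ∧ (∃ b, (b, a) ∈ D.edges) ∧ (∃ b, (a, b) ∈ D.edges)

/-- A `W`-edge: an edge beginning in a `W`-vertex. -/
def isWEdge (D : DG) (e : ℕ × ℕ) : Prop := e ∈ D.edges ∧ D.isWVert e.1

/-- An `E`-edge: an edge ending in an `E`-vertex. -/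
def isEEdge (D : DG) (e : ℕ × ℕ) : Prop := e ∈ D.edges ∧ D.isEVert e.2

/-- An `X`-edge, for `X ∈ {W, E}`. -/
def isXEdge (D : DG) : XDir → (ℕ × ℕ) → Prop
  | .W => D.isWEdge
  | .E => D.isEEdge

/-- An inner edge: it begins and ends in inner vertices. -/
def isInnerEdge (D : DG) (e : ℕ × ℕ) : Prop :=
  e ∈ D.edges ∧ D.isInner e.1 ∧ D.isInner e.2

/-- A functional `W`-edge `(a,b)`: `(a,c) ∈ D` implies `b = c`. -/
def funcWEdge (D : DG) (e : ℕ × ℕ) : Prop :=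
  D.isWEdge e ∧ ∀ c, (e.1, c) ∈ D.edges → c = e.2

/-- A functional `E`-edge `(b,a)`: `(c,a) ∈ D` implies `b = c`. -/
def funcEEdge (D : DG) (e : ℕ × ℕ) : Prop :=
  D.isEEdge e ∧ ∀ c, (c, e.2) ∈ D.edges → c = e.1

/-- `D` is `W`-`E`-functional: all its `W`-edges and `E`-edges are functional. -/
def WEFunctional (D : DG) : Prop :=
  (∀ e, D.isWEdge e → D.funcWEdge e) ∧ (∀ e, D.isEEdge e → D.funcEEdge e)

/-- Semi-adjacency: `(a,b)` or `(b,a)` is an edge. -/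
def semiAdj (D : DG) (a b : ℕ) : Prop := (a, b) ∈ D.edges ∨ (b, a) ∈ D.edges

/-- A semipath: a nonempty sequence of mutually distinct vertices in which any
two consecutive vertices are semi-adjacent. -/
def IsSemipath (D : DG) (l : List ℕ) : Prop :=
  l ≠ [] ∧ (∀ a ∈ l, a ∈ D.verts) ∧ l.Nodup ∧ l.Chain' D.semiAdj

/-- A path: a nonempty sequence of mutually distinct vertices in which
`(a_i, a_{i+1})` is an edge for consecutive vertices. -/
def IsPath (D : DG) (l : List ℕ) : Prop :=
  l ≠ [] ∧ (∀ a ∈ l, a ∈ D.verts) ∧ l.Nodup ∧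
    l.Chain' (fun a b => (a, b) ∈ D.edges)

/-- A semicycle: a sequence `a_1, ..., a_n` of vertices with `n ≥ 4`,
`a_1 = a_n`, `a_1, ..., a_{n-1}` mutually distinct, and consecutive vertices
semi-adjacent. -/
def IsSemicycle (D : DG) (l : List ℕ) : Prop :=
  4 ≤ l.length ∧ (∀ a ∈ l, a ∈ D.verts) ∧ l.head? = l.getLast? ∧
  l.dropLast.Nodup ∧ l.Chain' D.semiAdj

/-- `D` is weakly connected: every two vertices are joined by a semipath. -/
def WeaklyConnected (D : DG) : Prop :=
  ∀ a ∈ D.verts, ∀ b ∈ D.verts,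
    ∃ l, D.IsSemipath l ∧ l.head? = some a ∧ l.getLast? = some b

/-- `D` is asemicyclic: it has no semicycles. -/
def Asemicyclic (D : DG) : Prop := ∀ l, ¬ D.IsSemicycle l

/-- The cut `D_W[e_W - e_E]D_E`:
`(D_W - {e_W}) ∪ (D_E - {e_E}) ∪ {(e_W.1, e_E.2)}` on the union of the vertex
sets with `e_W.2` and `e_E.1` omitted. -/
def cut (DW DE : DG) (eW eE : ℕ × ℕ) : DG where
  verts := (DW.verts ∪ DE.verts) \ {eW.2, eE.1}
  edges := insert (eW.1, eE.2) ((DW.edges.erase eW) ∪ (DE.edges.erase eE))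

end DG

/-- The type of assignments of four distinguished edges `NW, SW, NE, SE`. -/
abbrev DistE : Type := YDir → XDir → ℕ × ℕ

/-- The type of labellings assigning to (inner) vertices four edges. -/
abbrev Lab : Type := ℕ → YDir → XDir → ℕ × ℕ

/-- `⟨D, ε⟩` is a basic K-graph: `D` is an oriented graph with a single inner
vertex `b`, all edges begin or end in `b`, every other vertex is joined to `b`
by an edge, there is at least one edge ending in `b` and one beginning in `b`,
the distinguished edges `ε Y W` end in `b` and `ε Y E` begin in `b`, and
(XYB): if there are at least two `X`-edges then `NX ≠ SX`. -/
def IsBasicK (D : DG) (ε : DistE) : Prop :=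
  D.IsOriented ∧
  ∃ b ∈ D.verts,
    (∀ e ∈ D.edges, e.1 = b ∨ e.2 = b) ∧
    (∀ v ∈ D.verts, v = b ∨ (v, b) ∈ D.edges ∨ (b, v) ∈ D.edges) ∧
    (∃ a, (a, b) ∈ D.edges) ∧ (∃ c, (b, c) ∈ D.edges) ∧
    (∀ Y : YDir, ε Y XDir.W ∈ D.edges ∧ (ε Y XDir.W).2 = b ∧
      ε Y XDir.E ∈ D.edges ∧ (ε Y XDir.E).1 = b) ∧
    (2 ≤ (D.edges.filter (fun e => e.2 = b)).card →
      ε YDir.N XDir.W ≠ ε YDir.S XDir.W) ∧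
    (2 ≤ (D.edges.filter (fun e => e.1 = b)).card →
      ε YDir.N XDir.E ≠ ε YDir.S XDir.E)

/-- `⟨D, ε⟩` is a basic Q-graph: as a basic K-graph but with no requirement
(XYB) on the distinguished edges. -/
def IsBasicQ (D : DG) (ε : DistE) : Prop :=
  D.IsOriented ∧
  ∃ b ∈ D.verts,
    (∀ e ∈ D.edges, e.1 = b ∨ e.2 = b) ∧
    (∀ v ∈ D.verts, v = b ∨ (v, b) ∈ D.edges ∨ (b, v) ∈ D.edges) ∧
    (∃ a, (a, b) ∈ D.edges) ∧ (∃ c, (b, c) ∈ D.edges) ∧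
    (∀ Y : YDir, ε Y XDir.W ∈ D.edges ∧ (ε Y XDir.W).2 = b ∧
      ε Y XDir.E ∈ D.edges ∧ (ε Y XDir.E).1 = b)

/-- Finite binary trees whose nodes carry an oriented graph, four
distinguished edges, and (at internal nodes) the two cut edges. -/
inductive CTree : Type
  | leaf (D : DG) (ε : DistE)
  | node (D : DG) (ε : DistE) (eW eE : ℕ × ℕ) (l r : CTree)

namespace CTree

/-- The graph at the root of the tree. -/
def rootGraph : CTree → DG
  | .leaf D _ => D
  | .node D _ _ _ _ _ => D

/-- The distinguished edges at the root of the tree. -/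
def dist : CTree → DistE
  | .leaf _ ε => ε
  | .node _ ε _ _ _ _ => ε

/-- The list of graphs-with-distinguished-edges at the leaves of the tree
(the basic K-graphs determining the leaves of a construction). -/
def leaves : CTree → List (DG × DistE)
  | .leaf D ε => [(D, ε)]
  | .node _ _ _ _ l r => l.leaves ++ r.leaves

end CTree

/-- The tree `G_W[e_W - e_E]G_E`, whose root graph is the cut of the root
graphs and whose distinguished edges are given by (XYD). -/
def mkNode (GW GE : CTree) (eW eE : ℕ × ℕ) : CTree :=
  .node (DG.cut GW.rootGraph GE.rootGraph eW eE)
    (fun Y X =>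
      match X with
      | .W => if eE = GE.dist Y XDir.W then GW.dist Y XDir.W else GE.dist Y XDir.W
      | .E => if eW = GW.dist Y XDir.E then GE.dist Y XDir.E else GW.dist Y XDir.E)
    eW eE GW GE

/-- The inductive notion of construction (of a global K-graph). -/
inductive IsConstruction : CTree → Prop
  | leaf (D : DG) (ε : DistE) (h : IsBasicK D ε) : IsConstruction (.leaf D ε)
  | node (D : DG) (ε : DistE) (eW eE : ℕ × ℕ) (GW GE : CTree)
      (hW : IsConstruction GW) (hE : IsConstruction GE)
      (hdisj : Disjoint GW.rootGraph.verts GE.rootGraph.verts)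
      (heW : GW.rootGraph.funcEEdge eW)
      (heE : GE.rootGraph.funcWEdge eE)
      (hD : D = DG.cut GW.rootGraph GE.rootGraph eW eE)
      (hXYC : ∀ Y : YDir, eW = GW.dist Y XDir.E ∨ eE = GE.dist Y XDir.W)
      (hεW : ∀ Y : YDir, ε Y XDir.W =
        if eE = GE.dist Y XDir.W then GW.dist Y XDir.W else GE.dist Y XDir.W)
      (hεE : ∀ Y : YDir, ε Y XDir.E =
        if eW = GW.dist Y XDir.E then GE.dist Y XDir.E else GW.dist Y XDir.E) :
      IsConstruction (.node D ε eW eE GW GE)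

/-- The inductive notion of construction of a global Q-graph: as
`IsConstruction` but with basic Q-graphs at the leaves. -/
inductive IsConstructionQ : CTree → Prop
  | leaf (D : DG) (ε : DistE) (h : IsBasicQ D ε) : IsConstructionQ (.leaf D ε)
  | node (D : DG) (ε : DistE) (eW eE : ℕ × ℕ) (GW GE : CTree)
      (hW : IsConstructionQ GW) (hE : IsConstructionQ GE)
      (hdisj : Disjoint GW.rootGraph.verts GE.rootGraph.verts)
      (heW : GW.rootGraph.funcEEdge eW)
      (heE : GE.rootGraph.funcWEdge eE)
      (hD : D = DG.cut GW.rootGraph GE.rootGraph eW eE)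
      (hXYC : ∀ Y : YDir, eW = GW.dist Y XDir.E ∨ eE = GE.dist Y XDir.W)
      (hεW : ∀ Y : YDir, ε Y XDir.W =
        if eE = GE.dist Y XDir.W then GW.dist Y XDir.W else GE.dist Y XDir.W)
      (hεE : ∀ Y : YDir, ε Y XDir.E =
        if eW = GW.dist Y XDir.E then GE.dist Y XDir.E else GW.dist Y XDir.E) :
      IsConstructionQ (.node D ε eW eE GW GE)

/-- ρ-equivalence of constructions: the least equivalence relation containing
ρ1, ρ2, ρ3 and closed under congruence with respect to cuts. -/
inductive RhoEquiv : CTree → CTree → Prop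
  | rho1 (P Q R : CTree) (eW eE fW fE : ℕ × ℕ)
      (hP : IsConstruction P) (hQ : IsConstruction Q) (hR : IsConstruction R)
      (heW : P.rootGraph.isEEdge eW) (hfW : Q.rootGraph.isEEdge fW)
      (heE : Q.rootGraph.isWEdge eE) (hfE : R.rootGraph.isWEdge fE)
      (h1 : IsConstruction (mkNode (mkNode P Q eW eE) R fW fE))
      (h2 : IsConstruction (mkNode P (mkNode Q R fW fE) eW eE)) :
      RhoEquiv (mkNode (mkNode P Q eW eE) R fW fE)
               (mkNode P (mkNode Q R fW fE) eW eE)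
  | rho2 (P Q R : CTree) (eW eE fW fE : ℕ × ℕ)
      (hP : IsConstruction P) (hQ : IsConstruction Q) (hR : IsConstruction R)
      (heW : P.rootGraph.isEEdge eW) (hfW : P.rootGraph.isEEdge fW)
      (hne : eW ≠ fW)
      (heE : Q.rootGraph.isWEdge eE) (hfE : R.rootGraph.isWEdge fE)
      (h1 : IsConstruction (mkNode (mkNode P Q eW eE) R fW fE))
      (h2 : IsConstruction (mkNode (mkNode P R fW fE) Q eW eE)) :
      RhoEquiv (mkNode (mkNode P Q eW eE) R fW fE)
               (mkNode (mkNode P R fW fE) Q eW eE)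
  | rho3 (P Q R : CTree) (eW eE fW fE : ℕ × ℕ)
      (hP : IsConstruction P) (hQ : IsConstruction Q) (hR : IsConstruction R)
      (heE : P.rootGraph.isWEdge eE) (hfE : P.rootGraph.isWEdge fE)
      (hne : eE ≠ fE)
      (heW : Q.rootGraph.isEEdge eW) (hfW : R.rootGraph.isEEdge fW)
      (h1 : IsConstruction (mkNode R (mkNode Q P eW eE) fW fE))
      (h2 : IsConstruction (mkNode Q (mkNode R P fW fE) eW eE)) :
      RhoEquiv (mkNode R (mkNode Q P eW eE) fW fE)
               (mkNode Q (mkNode R P fW fE) eW eE)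
  | congr (G1 G2 H1 H2 : CTree) (eW eE : ℕ × ℕ)
      (h12 : RhoEquiv G1 G2) (h34 : RhoEquiv H1 H2)
      (hc1 : IsConstruction (mkNode G1 H1 eW eE))
      (hc2 : IsConstruction (mkNode G2 H2 eW eE)) :
      RhoEquiv (mkNode G1 H1 eW eE) (mkNode G2 H2 eW eE)
  | refl (G : CTree) (h : IsConstruction G) : RhoEquiv G G
  | symm {G H : CTree} (h : RhoEquiv G H) : RhoEquiv H G
  | trans {G H K : CTree} (h1 : RhoEquiv G H) (h2 : RhoEquiv H K) :
      RhoEquiv G K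

/-- The class `[G]`: all constructions with the same root graph as `G` whose
leaves are determined by the same basic K-graphs as those of `G`. -/
def classOf (G : CTree) : Set CTree :=
  {H | IsConstruction H ∧ H.rootGraph = G.rootGraph ∧
    ∀ p : DG × DistE, p ∈ H.leaves ↔ p ∈ G.leaves}

/-- Renaming the vertices of a digraph along a function. -/
def DG.rename (f : ℕ → ℕ) (D : DG) : DG where
  verts := D.verts.image f
  edges := D.edges.image (fun e => (f e.1, f e.2))

/-- Renaming the vertices throughout a tree. -/
def CTree.rename (f : ℕ → ℕ) : CTree → CTree
  | .leaf D ε => .leaf (DG.rename f D) (fun Y X => (f (ε Y X).1, f (ε Y X).2))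
  | .node D ε eW eE l r =>
      .node (DG.rename f D) (fun Y X => (f (ε Y X).1, f (ε Y X).2))
        (f eW.1, f eW.2) (f eE.1, f eE.2) (l.rename f) (r.rename f)

/-- σ-equivalence: `H` is obtained from `G` by a bijective renaming of
vertices that fixes the root vertices (so only secondary vertices may be
renamed). -/
def SigmaEquiv (G H : CTree) : Prop :=
  ∃ f : ℕ ≃ ℕ, (∀ v ∈ G.rootGraph.verts, f v = v) ∧ H = G.rename f

/-- The global compass graph `‖G‖`: all constructions σ-equivalent to a
construction in `[G]`. -/
def normClass (G : CTree) : Set CTree :=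
  {H | ∃ K ∈ classOf G, SigmaEquiv K H}

/-- The labelling `L` of `λ(G) = ⟨D, L⟩`, defined by induction on `G`: at a
leaf given by a basic K-graph with inner vertex `b`, `YX(b) = YX(B)`; at a
node, the value is inherited from the appropriate subtree unless it is one of
the two cut edges, in which case it is the new edge introduced by the cut. -/
def lamG : CTree → Lab
  | .leaf _ ε => fun _ => ε
  | .node _ _ eW eE l r => fun a Y X =>
      let v := if a ∈ l.rootGraph.verts then lamG l a Y X else lamG r a Y X
      if v = eW ∨ v = eE then (eW.1, eE.2) else v

/-- `L` assigns to every inner vertex `a` edges `L a Y W` ending in `a` and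
edges `L a Y E` beginning in `a`. -/
def ProperLab (D : DG) (L : Lab) : Prop :=
  ∀ a, D.isInner a → ∀ Y : YDir,
    L a Y XDir.W ∈ D.edges ∧ (L a Y XDir.W).2 = a ∧
    L a Y XDir.E ∈ D.edges ∧ (L a Y XDir.E).1 = a

/-- `⟨D, L⟩` separates `N` from `S`. -/
def SeparatesNS (D : DG) (L : Lab) : Prop :=
  ∀ a, D.isInner a →
    (2 ≤ (D.edges.filter (fun e => e.2 = a)).card →
      L a YDir.N XDir.W ≠ L a YDir.S XDir.W) ∧
    (2 ≤ (D.edges.filter (fun e => e.1 = a)).card →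
      L a YDir.N XDir.E ≠ L a YDir.S XDir.E)

/-- A list `a_1, ..., a_n` is `Y`-decent in `⟨D, L⟩`: `n = 1`, or
`YE(a_1) = (a_1, a_2)`, or `YW(a_n) = (a_{n-1}, a_n)`. -/
def Ydecent (L : Lab) (Y : YDir) (l : List ℕ) : Prop :=
  ∀ a b t, l = a :: b :: t →
    (L a Y XDir.E = (a, b) ∨
      ∃ c d t', l.reverse = d :: c :: t' ∧ L d Y XDir.W = (c, d))

/-- `⟨D, L⟩` is a local compass graph. -/
def IsLocalCompass (D : DG) (L : Lab) : Prop :=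
  D.IsOriented ∧ ProperLab D L ∧
  D.WeaklyConnected ∧ D.Asemicyclic ∧ D.WEFunctional ∧ (∃ a, D.isInner a) ∧
  SeparatesNS D L ∧
  (∀ l, D.IsPath l → Ydecent L YDir.N l ∧ Ydecent L YDir.S l)

/-- A path (list) covers an edge `g` when `g` is a pair of consecutive
vertices of the list. -/
def covers (l : List ℕ) (g : ℕ × ℕ) : Prop := g ∈ l.zip l.tail

/-- A `YX`-edge in `⟨D, L⟩`. -/
def YXedge (D : DG) (L : Lab) (Y : YDir) : XDir → (ℕ × ℕ) → Prop
  | .W, g => g ∈ D.edges ∧ (L g.2 Y XDir.W = g ∨ D.isEEdge g)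
  | .E, g => g ∈ D.edges ∧ (L g.1 Y XDir.E = g ∨ D.isWEdge g)

/-- A proper semipath: a semipath such that neither it nor its reverse is a
path. -/
def ProperSemipath (D : DG) (l : List ℕ) : Prop :=
  D.IsSemipath l ∧ ¬ D.IsPath l ∧ ¬ D.IsPath l.reverse

/-- A transversal edge `(a,b)`: there is a proper semipath beginning with
`a, b` and a proper semipath beginning with `b, a`. -/
def Transversal (D : DG) (e : ℕ × ℕ) : Prop :=
  e ∈ D.edges ∧
  (∃ t, ProperSemipath D (e.1 :: e.2 :: t)) ∧
  (∃ t, ProperSemipath D (e.2 :: e.1 :: t))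

/-- The edge of `D` that connects two semi-adjacent vertices `a` and `b`. -/
def connEdge (D : DG) (a b : ℕ) : ℕ × ℕ :=
  if (a, b) ∈ D.edges then (a, b) else (b, a)

/-- The connecting edges of a list: the edges connecting its consecutive
vertices. -/
def connEdges (D : DG) (l : List ℕ) (e : ℕ × ℕ) : Prop :=
  ∃ p ∈ l.zip l.tail, e = connEdge D p.1 p.2

/-- A bifurcation: three distinct edges with a common vertex. -/
def Bifurcation (D : DG) (e1 e2 e3 : ℕ × ℕ) : Prop :=
  e1 ∈ D.edges ∧ e2 ∈ D.edges ∧ e3 ∈ D.edges ∧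
  e1 ≠ e2 ∧ e1 ≠ e3 ∧ e2 ≠ e3 ∧
  ∃ v, (v = e1.1 ∨ v = e1.2) ∧ (v = e2.1 ∨ v = e2.2) ∧ (v = e3.1 ∨ v = e3.2)

/-- A K-graph: a weakly connected, asemicyclic, `W`-`E`-functional oriented
graph with an inner vertex in which no bifurcation is transversal. -/
def IsKGraph (D : DG) : Prop :=
  D.IsOriented ∧ D.WeaklyConnected ∧ D.Asemicyclic ∧ D.WEFunctional ∧
  (∃ a, D.isInner a) ∧
  ∀ e1 e2 e3, Bifurcation D e1 e2 e3 →
    ¬ (Transversal D e1 ∧ Transversal D e2 ∧ Transversal D e3)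

/-- A Q-graph: a weakly connected, asemicyclic, `W`-`E`-functional oriented
graph with an inner vertex. -/
def IsQGraph (D : DG) : Prop :=
  D.IsOriented ∧ D.WeaklyConnected ∧ D.Asemicyclic ∧ D.WEFunctional ∧
  ∃ a, D.isInner a




/-- From a list headed by an element satisfying `P` containing an element
violating `P`, extract an adjacent crossing pair. -/
lemma cross1 {α : Type*} {P : α → Prop} :
    ∀ (l : List α) (x : α), l.head? = some x → P x → (∃ y ∈ l, ¬ P y) →
      ∃ s u v t, l = s ++ u :: v :: t ∧ P u ∧ ¬ P v := by
  intro l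
  induction l with
  | nil => intro x hx; simp at hx
  | cons a l ih =>
    intro x hx hP hy
    simp at hx; subst hx
    obtain ⟨y, hyl, hyP⟩ := hy
    rcases List.mem_cons.mp hyl with h | hyl
    · exact absurd (h ▸ hP) hyP
    · cases l with
      | nil => simp at hyl
      | cons b l' =>
        by_cases hb : P b
        · obtain ⟨s, u, v, t, hdec, hu, hv⟩ := ih b rfl hb ⟨y, hyl, hyP⟩
          exact ⟨a :: s, u, v, t, by simp [hdec], hu, hv⟩
        · exact ⟨[], a, b, l', rfl, hP, hb⟩

@[simp]
theorem List.chain'_nil {α : Type*} {R : α → α → Prop} : List.Chain' R [] :=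
  List.isChain_nil

@[simp]
theorem List.chain'_singleton {α : Type*} {R : α → α → Prop} (a : α) :
    List.Chain' R [a] :=
  List.isChain_singleton a

@[simp]
theorem List.chain'_cons {α : Type*} {R : α → α → Prop} {x y : α} {l : List α} :
    List.Chain' R (x :: y :: l) ↔ R x y ∧ List.Chain' R (y :: l) :=
  List.isChain_cons_cons

theorem List.chain'_append {α : Type*} {R : α → α → Prop} {l₁ l₂ : List α} :
    List.Chain' R (l₁ ++ l₂) ↔ List.Chain' R l₁ ∧ List.Chain' R l₂ ∧
      ∀ x ∈ l₁.getLast?, ∀ y ∈ l₂.head?, R x y :=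
  List.isChain_append

theorem List.chain'_reverse {α : Type*} {R : α → α → Prop} {l : List α} :
    List.Chain' R l.reverse ↔ List.Chain' (flip R) l :=
  List.isChain_reverse

theorem List.Chain'.imp {α : Type*} {R S : α → α → Prop}
    (H : ∀ a b, R a b → S a b) {l : List α} (p : List.Chain' R l) : List.Chain' S l :=
  List.IsChain.imp H p

/-- In a "cycle list" (head = last, dropLast nodup) a repeated element occurs
exactly at the head and the last position. -/
lemma dup_head_last {α : Type*} {l A B C : List α} {x : α}
    (h : l = A ++ x :: B ++ x :: C) (hnd : l.dropLast.Nodup)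
    (hhl : l.head? = l.getLast?) : A = [] ∧ C = [] := by
  have hC : C = [] := by
    by_contra hC
    have : l.dropLast = A ++ x :: B ++ x :: C.dropLast := by
      rw [h]
      rw [show A ++ x :: B ++ x :: C = (A ++ x :: B ++ [x]) ++ C by simp,
        List.dropLast_append_of_ne_nil hC]
      simp
    rw [this] at hnd
    simp [List.nodup_append] at hnd
  subst hC
  constructor
  · by_contra hA
    -- head is x
    have hlast : l.getLast? = some x := by
      rw [h]; rw [List.getLast?_append]; simp
    have hhead : l.head? = some x := by rw [hhl, hlast]
    have hxA : x ∈ A := by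
      cases A with
      | nil => exact absurd rfl hA
      | cons a A' => simp [h] at hhead; simp [hhead]
    have : l.dropLast = A ++ x :: B := by
      rw [h]
      rw [show A ++ x :: B ++ [x] = (A ++ x :: B) ++ [x] by simp,
        List.dropLast_concat]
    rw [this] at hnd
    simp [List.nodup_append] at hnd
    exact (hnd.2.2 x hxA).1 rfl
  · rfl

lemma chain'_imp_mem {α : Type*} {R S : α → α → Prop} :
    ∀ {l : List α}, l.Chain' R → (∀ x ∈ l, ∀ y ∈ l, R x y → S x y) → l.Chain' S := by
  intro l
  induction l with
  | nil => intro _ _; exact List.chain'_nil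
  | cons a l ih =>
    intro hch himp
    cases l with
    | nil => simp
    | cons b l' =>
      rw [List.chain'_cons] at hch ⊢
      exact ⟨himp a (by simp) b (by simp) hch.1,
        ih hch.2 (fun x hx y hy => himp x (by simp [hx]) y (by simp [hy]))⟩

lemma chain_all {α : Type*} {R : α → α → Prop} {P : α → Prop}
    (hcl : ∀ x y, R x y → (P x ↔ P y)) :
    ∀ (l : List α), l.Chain' R → ∀ u ∈ l, P u → ∀ v ∈ l, P v := by
  intro l
  induction l with
  | nil => intro _ u hu; simp at hu
  | cons a l ih =>
    intro hch u hu hPu v hv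
    cases l with
    | nil =>
      simp at hu hv; subst hu hv; exact hPu
    | cons b l' =>
      rw [List.chain'_cons] at hch
      have hab := hcl a b hch.1
      have key : P b := by
        rcases List.mem_cons.mp hu with h | hu
        · exact hab.mp (h ▸ hPu)
        · exact ih hch.2 u hu hPu b (by simp)
      rcases List.mem_cons.mp hv with h | hv
      · subst h; exact hab.mpr key
      · exact ih hch.2 b (by simp) key v hv


lemma pfst {α β : Type*} {p q : α × β} (h : p = q) : p.1 = q.1 := by rw [h]
lemma psnd {α β : Type*} {p q : α × β} (h : p = q) : p.2 = q.2 := by rw [h]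

/-! ### Semipath machinery -/

lemma DG.semiAdj_symm {H : DG} {u v : ℕ} (h : H.semiAdj u v) : H.semiAdj v u :=
  Or.symm h

/-- Reachability by a semipath. -/
def Reach (H : DG) (u v : ℕ) : Prop :=
  ∃ l, H.IsSemipath l ∧ l.head? = some u ∧ l.getLast? = some v

lemma reach_refl {H : DG} {v : ℕ} (hv : v ∈ H.verts) : Reach H v v :=
  ⟨[v], ⟨by simp, by simpa, by simp, by simp⟩, by simp, by simp⟩

lemma reach_mem_verts {H : DG} {u v : ℕ} (h : Reach H u v) : u ∈ H.verts ∧ v ∈ H.verts := by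
  obtain ⟨l, hl, hh, hg⟩ := h
  exact ⟨hl.2.1 u (by have := List.mem_of_mem_head? hh; exact this),
    hl.2.1 v (by have := List.mem_of_mem_head? ((List.head?_reverse (l := l)) ▸ hg); simpa using this)⟩

lemma isSemipath_reverse {H : DG} {l : List ℕ} (h : H.IsSemipath l) :
    H.IsSemipath l.reverse := by
  obtain ⟨h1, h2, h3, h4⟩ := h
  refine ⟨by simpa, by simpa, by simpa, ?_⟩
  rw [List.chain'_reverse]
  exact h4.imp (fun a b hab => DG.semiAdj_symm hab)

lemma reach_symm {H : DG} {u v : ℕ} (h : Reach H u v) : Reach H v u := by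
  obtain ⟨l, hl, hh, hg⟩ := h
  exact ⟨l.reverse, isSemipath_reverse hl, by rwa [List.head?_reverse],
    by rwa [List.getLast?_reverse]⟩

lemma head?_append_left {α : Type*} {l t : List α} (h : l ≠ []) :
    (l ++ t).head? = l.head? := by
  cases l with
  | nil => exact absurd rfl h
  | cons a l' => simp

/-- Extract a semipath to any member: prefix extraction. -/
lemma reach_mem {H : DG} {l : List ℕ} (hl : H.IsSemipath l) {u : ℕ}
    (hh : l.head? = some u) {v : ℕ} (hv : v ∈ l) :
    ∃ r, H.IsSemipath r ∧ r.head? = some u ∧ r.getLast? = some v ∧ ∀ x ∈ r, x ∈ l := by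
  obtain ⟨s, t, rfl⟩ := List.append_of_mem hv
  have hpre : (s ++ [v]) <+: s ++ v :: t := ⟨t, by simp⟩
  refine ⟨s ++ [v], ⟨by
      intro hcon
      exact absurd (congrArg List.length hcon) (by simp), ?_,
      hl.2.2.1.sublist hpre.sublist, hl.2.2.2.prefix hpre⟩,
    ?_, by simp, ?_⟩
  · intro a ha; exact hl.2.1 a (hpre.sublist.mem ha)
  · rw [show (s ++ [v]).head? = (s ++ v :: t).head? by cases s <;> simp, hh]
  · intro x hx; exact hpre.sublist.mem hx

/-- Fusion lemma: transitivity of reachability, with control of the vertices. -/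
lemma reach_trans_aux {H : DG} :
    ∀ (q : List ℕ), H.IsSemipath q → ∀ (p : List ℕ) (u : ℕ), H.IsSemipath p →
      p.head? = some u → p.getLast? = q.head? →
      ∃ r, H.IsSemipath r ∧ r.head? = some u ∧ r.getLast? = q.getLast? ∧
        ∀ x ∈ r, x ∈ p ∨ x ∈ q := by
  intro q
  induction q using List.reverseRecOn with
  | nil => intro hq; exact absurd rfl hq.1
  | append_singleton q' w ih =>
    intro hq p u hp hh hg
    by_cases hq'ne : q' = []
    · subst hq'ne
      refine ⟨p, hp, hh, ?_, fun x hx => Or.inl hx⟩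
      simp only [List.nil_append] at hg ⊢
      simpa using hg
    · have hopq' : H.IsSemipath q' := by
        refine ⟨hq'ne, fun a ha => hq.2.1 a (by simp [ha]), hq.2.2.1.sublist (by simp), ?_⟩
        exact hq.2.2.2.prefix ⟨[w], rfl⟩
      have hgq' : (q' ++ [w]).head? = q'.head? := head?_append_left hq'ne
      obtain ⟨r, hr, hrh, hrg, hrm⟩ := ih hopq' p u hp hh (by rw [hg, hgq'])
      have hjun : ∀ x ∈ q'.getLast?, H.semiAdj x w := by
        intro x hx
        have := hq.2.2.2
        rw [List.chain'_append] at this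
        exact this.2.2 x hx w rfl
      have hglw : (q' ++ [w]).getLast? = some w := List.getLast?_concat
      by_cases hwr : w ∈ r
      · obtain ⟨r2, hr2, hr2h, hr2g, hr2m⟩ := reach_mem hr hrh hwr
        refine ⟨r2, hr2, hr2h, by rw [hglw, hr2g], ?_⟩
        intro x hx
        rcases hrm x (hr2m x hx) with h | h
        · exact Or.inl h
        · exact Or.inr (by simp [h])
      · refine ⟨r ++ [w], ⟨by simp, ?_, ?_, ?_⟩, ?_, by rw [hglw]; simp, ?_⟩
        · intro a ha
          simp at ha
          rcases ha with ha | ha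
          · exact hr.2.1 a ha
          · exact hq.2.1 a (by simp [ha])
        · simp [List.nodup_append, hr.2.2.1]
          intro a ha h; exact hwr (h ▸ ha)
        · rw [List.chain'_append]
          refine ⟨hr.2.2.2, by simp, ?_⟩
          intro x hx y hy
          simp at hy; subst hy
          exact hjun x (by rw [← hrg]; exact hx)
        · rw [head?_append_left hr.1]; exact hrh
        · intro x hx
          simp at hx
          rcases hx with hx | hx
          · rcases hrm x hx with h | h
            · exact Or.inl h
            · exact Or.inr (by simp [h])
          · exact Or.inr (by simp [hx])

lemma reach_trans {H : DG} {u v w : ℕ} (h1 : Reach H u v) (h2 : Reach H v w) :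
    Reach H u w := by
  obtain ⟨p, hp, hph, hpg⟩ := h1
  obtain ⟨q, hq, hqh, hqg⟩ := h2
  obtain ⟨r, hr, hrh, hrg, _⟩ := reach_trans_aux q hq p u hp hph (by rw [hpg, hqh])
  exact ⟨r, hr, hrh, by rw [hrg, hqg]⟩

/-- Concatenating two vertex-disjoint semipaths joined by a semi-adjacency. -/
lemma semipath_append {H : DG} {p q : List ℕ} (hp : H.IsSemipath p) (hq : H.IsSemipath q)
    (hdisj : ∀ x ∈ p, x ∉ q)
    (hj : ∀ x ∈ p.getLast?, ∀ y ∈ q.head?, H.semiAdj x y) :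
    H.IsSemipath (p ++ q) := by
  refine ⟨by simp [hp.1], ?_, ?_, ?_⟩
  · intro a ha; simp at ha; rcases ha with h | h
    · exact hp.2.1 a h
    · exact hq.2.1 a h
  · rw [List.nodup_append]
    exact ⟨hp.2.2.1, hq.2.2.1, fun a ha b hb h => hdisj a ha (h ▸ hb)⟩
  · rw [List.chain'_append]
    exact ⟨hp.2.2.2, hq.2.2.2, hj⟩

/-- A vertex whose unique semi-neighbour is `a0` cannot occur inside a semipath
avoiding it at both ends. -/
lemma semipath_avoid {H : DG} {l : List ℕ} {b a0 : ℕ}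
    (hb : ∀ u, H.semiAdj b u → u = a0)
    (hl : H.IsSemipath l) (hh : l.head? ≠ some b) (hg : l.getLast? ≠ some b) :
    b ∉ l := by
  intro hmem
  obtain ⟨s, t, rfl⟩ := List.append_of_mem hmem
  have hs : s ≠ [] := by
    rintro rfl; exact hh (by simp)
  have ht : t ≠ [] := by
    rintro rfl; exact hg (by simp)
  have hch := hl.2.2.2
  rw [List.chain'_append] at hch
  -- getLast s is semiadjacent to b
  obtain ⟨x, hxmem, hx⟩ : ∃ x, x ∈ s ∧ H.semiAdj x b := by
    have := hch.2.2 (s.getLast hs) (by simp [List.getLast?_eq_getLast hs]) b rfl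
    exact ⟨s.getLast hs, List.getLast_mem hs, this⟩
  obtain ⟨y, hymem, hy⟩ : ∃ y, y ∈ t ∧ H.semiAdj b y := by
    cases t with
    | nil => exact absurd rfl ht
    | cons y t' =>
      have := hch.2.1
      rw [List.chain'_cons] at this
      exact ⟨y, by simp, this.1⟩
  have hxa : x = a0 := hb x (DG.semiAdj_symm hx)
  have hya : y = a0 := hb y hy
  have hnd := hl.2.2.1
  rw [List.nodup_append] at hnd
  exact hnd.2.2 a0 (hxa ▸ hxmem) a0 (by simp [hya ▸ hymem]) rfl

/-! ### The bridge lemma: no semicycle can cross a unique bridge -/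

lemma no_bridge_aux {R : ℕ → ℕ → Prop} (hsym : ∀ u v, R u v → R v u)
    {P : ℕ → Prop} {A D0 : ℕ}
    (hcr : ∀ u v, R u v → P u → ¬ P v → u = A ∧ v = D0)
    {l : List ℕ} (hlen : 4 ≤ l.length) (hhl : l.head? = l.getLast?)
    (hnd : l.dropLast.Nodup) (hch : l.Chain' R)
    {h0 : ℕ} (hh : l.head? = some h0) (hP : P h0) (hy : ∃ y ∈ l, ¬ P y) : False := by
  obtain ⟨s, u, v, t, hdec, hu, hv⟩ := cross1 l h0 hh hP hy
  have hRuv : R u v := by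
    have h1 : l.Chain' R := hch
    rw [hdec] at h1
    exact (List.chain'_cons.mp (h1.suffix ⟨s, rfl⟩)).1
  obtain ⟨hu1, hv1⟩ := hcr u v hRuv hu hv
  rw [hu1, hv1] at hdec
  have hvD : ¬ P D0 := hv1 ▸ hv
  clear hu hv hu1 hv1 hRuv
  have hlast : l.getLast? = some h0 := hhl ▸ hh
  have hmne : (D0 :: t) ≠ [] := by simp
  have hmlast : (D0 :: t).getLast? = some h0 := by
    rw [hdec, show s ++ A :: D0 :: t = (s ++ [A]) ++ (D0 :: t) by simp,
      List.getLast?_append] at hlast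
    simpa [List.getLast?_eq_getLast] using hlast
  have hPlast : P ((D0 :: t).getLast hmne) := by
    rw [List.getLast?_eq_getLast hmne] at hmlast
    rw [show (D0 :: t).getLast hmne = h0 from Option.some_injective _ hmlast]
    exact hP
  obtain ⟨s', u', v', t', hdec', hu', hv'⟩ :=
    cross1 (D0 :: t).reverse ((D0 :: t).getLast hmne)
      (by rw [List.head?_reverse, List.getLast?_eq_getLast hmne])
      hPlast ⟨D0, by simp, hvD⟩
  have hform : D0 :: t = t'.reverse ++ v' :: u' :: s'.reverse := by
    have h2 := congrArg List.reverse hdec'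
    simpa using h2
  have hRv'u' : R v' u' := by
    have h1 : l.Chain' R := hch
    rw [hdec, hform] at h1
    have h2 : (v' :: u' :: s'.reverse).Chain' R :=
      h1.suffix ⟨s ++ A :: t'.reverse, by simp⟩
    exact (List.chain'_cons.mp h2).1
  obtain ⟨hu2, hv2⟩ := hcr u' v' (hsym _ _ hRv'u') hu' hv'
  rw [hu2, hv2] at hform
  cases htr : t'.reverse with
  | nil =>
    rw [htr] at hform
    simp only [List.nil_append] at hform
    have ht : t = A :: s'.reverse := by injection hform
    rw [ht] at hdec
    obtain ⟨hA, hC⟩ := dup_head_last (l := l) (A := s) (B := [D0]) (C := s'.reverse)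
      (x := A) (by rw [hdec]; simp) hnd hhl
    rw [hdec, hA, hC] at hlen
    simp at hlen
  | cons w T =>
    rw [htr] at hform
    have h3 : D0 :: t = w :: (T ++ D0 :: A :: s'.reverse) := by simpa using hform
    have ht : t = T ++ D0 :: A :: s'.reverse := by injection h3
    rw [ht] at hdec
    obtain ⟨hA, _⟩ := dup_head_last (l := l) (A := s ++ [A]) (B := T) (C := A :: s'.reverse)
      (x := D0) (by rw [hdec]; simp) hnd hhl
    simp at hA

lemma no_bridge {R : ℕ → ℕ → Prop} (hsym : ∀ u v, R u v → R v u)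
    {P : ℕ → Prop} {A D0 : ℕ}
    (hcr : ∀ u v, R u v → P u → ¬ P v → u = A ∧ v = D0)
    {l : List ℕ} (hlen : 4 ≤ l.length) (hhl : l.head? = l.getLast?)
    (hnd : l.dropLast.Nodup) (hch : l.Chain' R)
    (hx : ∃ x ∈ l, P x) (hy : ∃ y ∈ l, ¬ P y) : False := by
  have hne : l ≠ [] := by rintro rfl; simp at hlen
  set h0 := l.head hne with hh0
  have hh : l.head? = some h0 := List.head?_eq_head hne
  by_cases hPh : P h0
  · exact no_bridge_aux hsym hcr hlen hhl hnd hch hh hPh hy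
  · refine no_bridge_aux (P := fun x => ¬ P x) (A := D0) (D0 := A) hsym ?_ hlen hhl hnd hch hh hPh ?_
    · intro u v hR hnu hnnv
      obtain ⟨h1, h2⟩ := hcr v u (hsym u v hR) (not_not.mp hnnv) hnu
      exact ⟨h2, h1⟩
    · obtain ⟨x, hxl, hxP⟩ := hx
      exact ⟨x, hxl, not_not_intro hxP⟩

/-! ### Basic facts about Q-graphs -/

lemma DG.IsOriented.mem_verts {D : DG} (hD : D.IsOriented) {e : ℕ × ℕ}
    (he : e ∈ D.edges) : e.1 ∈ D.verts ∧ e.2 ∈ D.verts := hD.1 e he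

lemma isQGraph_reach {D : DG} (hQ : IsQGraph D) {u v : ℕ}
    (hu : u ∈ D.verts) (hv : v ∈ D.verts) : Reach D u v := hQ.2.1 u hu v hv

/-- In a Q-graph, every `E`-edge begins in an inner vertex. -/
lemma eedge_start_inner {D : DG} (hQ : IsQGraph D) {e : ℕ × ℕ}
    (he : D.isEEdge e) : D.isInner e.1 := by
  obtain ⟨hD, hWC, hAC, hWE, q, hq⟩ := hQ
  obtain ⟨hemem, hv⟩ := he
  have hu1 : e.1 ∈ D.verts := (hD.mem_verts hemem).1
  by_cases hin : ∃ x, (x, e.1) ∈ D.edges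
  · exact ⟨hu1, hin, ⟨e.2, hemem⟩⟩
  exfalso
  push_neg at hin
  -- e.1 is a W-vertex, so e is both a functional W-edge and a functional E-edge
  have hW : D.isWVert e.1 := ⟨hu1, hin⟩
  have hfW := hWE.1 e ⟨hemem, hW⟩
  have hfE := hWE.2 e ⟨hemem, hv⟩
  have hqu : q ≠ e.1 := by
    rintro rfl
    obtain ⟨_, ⟨x, hx⟩, _⟩ := hq
    exact hin x hx
  have hqv : q ≠ e.2 := by
    rintro rfl
    obtain ⟨_, _, ⟨y, hy⟩⟩ := hq
    exact hv.2 y hy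
  obtain ⟨l, hl, hh, hg⟩ := hWC e.1 hu1 q hq.1
  match l, hh with
  | [x], hh =>
    simp at hh hg
    exact hqu (by rw [← hg, hh])
  | x :: y :: t, hh =>
    simp at hh
    subst hh
    have hchain := hl.2.2.2
    rw [List.chain'_cons] at hchain
    have hy : y = e.2 := by
      rcases hchain.1 with h | h
      · exact hfW.2 y h
      · exact absurd h (hin y)
    subst hy
    match t, hg with
    | [], hg => simp at hg; exact hqv hg.symm
    | z :: t', hg =>
      have hchain2 := hchain.2
      rw [List.chain'_cons] at hchain2
      rcases hchain2.1 with h | h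
      · exact hv.2 z h
      · have : z = e.1 := hfE.2 z h
        subst this
        have := hl.2.2.1
        simp at this

/-- In a Q-graph, every `W`-edge ends in an inner vertex. -/
lemma wedge_end_inner {D : DG} (hQ : IsQGraph D) {e : ℕ × ℕ}
    (he : D.isWEdge e) : D.isInner e.2 := by
  obtain ⟨hD, hWC, hAC, hWE, q, hq⟩ := hQ
  obtain ⟨hemem, hv⟩ := he
  have hu2 : e.2 ∈ D.verts := (hD.mem_verts hemem).2
  by_cases hout : ∃ x, (e.2, x) ∈ D.edges
  · exact ⟨hu2, ⟨e.1, hemem⟩, hout⟩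
  exfalso
  push_neg at hout
  have hE : D.isEVert e.2 := ⟨hu2, hout⟩
  have hfW := hWE.1 e ⟨hemem, hv⟩
  have hfE := hWE.2 e ⟨hemem, hE⟩
  have hqu : q ≠ e.2 := by
    rintro rfl
    obtain ⟨_, _, ⟨y, hy⟩⟩ := hq
    exact hout y hy
  have hqv : q ≠ e.1 := by
    rintro rfl
    obtain ⟨_, ⟨x, hx⟩, _⟩ := hq
    exact hv.2 x hx
  obtain ⟨l, hl, hh, hg⟩ := hWC e.2 hu2 q hq.1
  match l, hh with
  | [x], hh =>
    simp at hh hg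
    exact hqu (by rw [← hg, hh])
  | x :: y :: t, hh =>
    simp at hh
    subst hh
    have hchain := hl.2.2.2
    rw [List.chain'_cons] at hchain
    have hy : y = e.1 := by
      rcases hchain.1 with h | h
      · exact absurd h (hout y)
      · exact hfE.2 y h
    subst hy
    match t, hg with
    | [], hg => simp at hg; exact hqv hg.symm
    | z :: t', hg =>
      have hchain2 := hchain.2
      rw [List.chain'_cons] at hchain2
      rcases hchain2.1 with h | h
      · have : z = e.2 := hfW.2 z h
        subst this
        have := hl.2.2.1
        simp at this
      · exact hv.2 z h

/-- A Q-graph with two distinct inner vertices has an inner edge. -/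
lemma exists_inner_edge {D : DG} (hQ : IsQGraph D) {p q : ℕ}
    (hp : D.isInner p) (hq : D.isInner q) (hne : p ≠ q) :
    ∃ e ∈ D.edges, D.isInner e.1 ∧ D.isInner e.2 := by
  obtain ⟨hD, hWC, hAC, hWE, _⟩ := hQ
  obtain ⟨l, hl, hh, hg⟩ := hWC p hp.1 q hq.1
  match l, hh with
  | [x], hh => simp at hh hg; exact absurd (by rw [← hg, hh]) hne
  | x :: y :: t, hh =>
    simp at hh; subst hh
    have hchain := hl.2.2.2
    rw [List.chain'_cons] at hchain
    have hyv : y ∈ D.verts := by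
      rcases hchain.1 with h | h
      · exact (hD.mem_verts h).2
      · exact (hD.mem_verts h).1
    rcases hchain.1 with h | h
    · -- (x, y) is an edge
      refine ⟨(x, y), h, hp, hyv, ⟨x, h⟩, ?_⟩
      by_contra hout
      push_neg at hout
      have hE : D.isEVert y := ⟨hyv, fun b hb => hout b hb⟩
      have hfE := hWE.2 (x, y) ⟨h, hE⟩
      match t, hg with
      | [], hg =>
        simp at hg; subst hg
        obtain ⟨_, _, z, hz⟩ := hq
        exact hE.2 z hz
      | z :: t', hg =>
        have hchain2 := hchain.2
        rw [List.chain'_cons] at hchain2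
        rcases hchain2.1 with h2 | h2
        · exact hE.2 z h2
        · have hzx : z = x := hfE.2 z h2
          subst hzx
          have := hl.2.2.1
          simp at this
    · -- (y, x) is an edge
      refine ⟨(y, x), h, ⟨hyv, ?_, ⟨x, h⟩⟩, hp⟩
      by_contra hin
      push_neg at hin
      have hW : D.isWVert y := ⟨hyv, fun b hb => hin b hb⟩
      have hfW := hWE.1 (y, x) ⟨h, hW⟩
      match t, hg with
      | [], hg =>
        simp at hg; subst hg
        obtain ⟨_, ⟨z, hz⟩, _⟩ := hq
        exact hW.2 z hz
      | z :: t', hg =>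
        have hchain2 := hchain.2
        rw [List.chain'_cons] at hchain2
        rcases hchain2.1 with h2 | h2
        · have hzx : z = x := hfW.2 z h2
          subst hzx
          have := hl.2.2.1
          simp at this
        · exact hW.2 z h2

open scoped Classical in
/-- Every Q-graph has a functional `E`-edge. -/
lemma exists_funcEEdge {D : DG} (hQ : IsQGraph D) : ∃ e, D.funcEEdge e := by
  classical
  obtain ⟨hD, hWC, hAC, hWE, a0, ha0⟩ := hQ
  have hlen_le : ∀ l, D.IsPath l → l.length ≤ D.verts.card := by
    intro l hl
    rw [← List.toFinset_card_of_nodup hl.2.2.1]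
    exact Finset.card_le_card (fun x hx => hl.2.1 x (List.mem_toFinset.mp hx))
  set S : Finset ℕ :=
    (Finset.range (D.verts.card + 1)).filter (fun n => ∃ l, D.IsPath l ∧ l.length = n) with hS
  obtain ⟨z0, hz0⟩ := ha0.2.2
  have hz0v : z0 ∈ D.verts := (hD.mem_verts hz0).2
  have hne0 : a0 ≠ z0 := hD.2.1 _ hz0
  have h2S : 2 ∈ S := by
    rw [hS, Finset.mem_filter, Finset.mem_range]
    refine ⟨?_, [a0, z0], ⟨by simp, ?_, by simp [hne0], by simp [hz0]⟩, rfl⟩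
    · have : ({a0, z0} : Finset ℕ) ⊆ D.verts := by
        intro x hx; simp at hx; rcases hx with rfl | rfl
        · exact ha0.1
        · exact hz0v
      have := Finset.card_le_card this
      rw [Finset.card_insert_of_notMem (by simp [hne0]), Finset.card_singleton] at this
      omega
    · intro x hx; simp at hx; rcases hx with rfl | rfl
      · exact ha0.1
      · exact hz0v
  have hSne : S.Nonempty := ⟨2, h2S⟩
  set n := S.max' hSne with hn
  have hnS : n ∈ S := S.max'_mem hSne
  rw [hS, Finset.mem_filter] at hnS
  obtain ⟨-, l, hl, hln⟩ := hnS
  have hn2 : 2 ≤ n := S.le_max' 2 h2S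
  -- the last vertex of l
  have hlne : l ≠ [] := by rintro rfl; simp at hln; omega
  set w := l.getLast hlne with hw
  have hwl : l.getLast? = some w := List.getLast?_eq_getLast hlne
  -- w has no outgoing edge
  have hout : ∀ z, (w, z) ∉ D.edges := by
    intro z hz
    by_cases hzl : z ∈ l
    · -- a directed cycle, hence a semicycle
      obtain ⟨s, t₁, rfl⟩ := List.append_of_mem hzl
      have hzw : (z :: t₁).getLast? = some w := by
        rw [← hwl, List.getLast?_append, List.getLast?_eq_getLast (l := z :: t₁) (by simp)]
        rfl
      have hchsuf : (z :: t₁).Chain' (fun a b => (a, b) ∈ D.edges) :=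
        hl.2.2.2.suffix ⟨s, rfl⟩
      match t₁, hzw, hchsuf with
      | [], hzw, _ =>
        simp at hzw
        exact hD.2.1 (w, z) hz (by simp [hzw])
      | [y], hzw, hchsuf =>
        simp at hzw
        subst hzw
        rw [List.chain'_cons] at hchsuf
        exact hD.2.2.1 z w hchsuf.1 hz
      | y₁ :: y₂ :: t₂, hzw, hchsuf =>
        refine hAC ((z :: y₁ :: y₂ :: t₂) ++ [z]) ⟨by simp, ?_, ?_, ?_, ?_⟩
        · intro x hx
          refine hl.2.1 x ?_
          simp at hx ⊢
          tauto
        · rw [List.getLast?_concat, head?_append_left (by simp)]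
          simp
        · rw [List.dropLast_concat]
          exact hl.2.2.1.sublist (by simp)
        · rw [List.chain'_append]
          refine ⟨hchsuf.imp (fun a b h => Or.inl h), by simp, ?_⟩
          intro x hx y hy
          simp at hy; subst hy
          rw [hzw] at hx
          simp at hx; subst hx
          exact Or.inl hz
    · -- extend the path
      have hzv : z ∈ D.verts := (hD.mem_verts hz).2
      have hpath : D.IsPath (l ++ [z]) := by
        refine ⟨by simp, ?_, ?_, ?_⟩
        · intro x hx; simp at hx
          rcases hx with hx | rfl
          · exact hl.2.1 x hx
          · exact hzv
        · rw [List.nodup_append]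
          exact ⟨hl.2.2.1, by simp, by intro x hx y hy h; simp at hy; subst hy; subst h; exact hzl hx⟩
        · rw [List.chain'_append]
          refine ⟨hl.2.2.2, by simp, ?_⟩
          intro x hx y hy
          simp at hy; subst hy
          rw [hwl] at hx; simp at hx; subst hx
          exact hz
      have : n + 1 ∈ S := by
        rw [hS, Finset.mem_filter, Finset.mem_range]
        refine ⟨?_, l ++ [z], hpath, by simp [hln]⟩
        have := hlen_le _ hpath
        simp [hln] at this
        omega
      have := S.le_max' _ this
      omega
  -- the predecessor of w in l
  obtain ⟨u, hu⟩ : ∃ u, (u, w) ∈ D.edges := by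
    have hrev : l.reverse.Chain' (flip (fun a b : ℕ => (a, b) ∈ D.edges)) :=
      (List.chain'_reverse).mpr hl.2.2.2
    have hrh : l.reverse.head? = some w := by rw [List.head?_reverse, hwl]
    rcases hrl : l.reverse with _ | ⟨w', t⟩
    · rw [hrl] at hrh; simp at hrh
    rcases t with _ | ⟨u, t'⟩
    · have := congrArg List.length hrl
      simp [hln] at this
      omega
    · rw [hrl] at hrev hrh
      simp at hrh
      subst hrh
      exact ⟨u, (List.chain'_cons.mp hrev).1⟩
  have hEv : D.isEVert w := ⟨hl.2.1 w (List.getLast_mem hlne), hout⟩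
  exact ⟨(u, w), hWE.2 (u, w) ⟨hu, hEv⟩⟩

/-! ### Basic Q-graphs are Q-graphs -/

lemma basicQ_isQ {D : DG} {ε : DistE} (h : IsBasicQ D ε) : IsQGraph D := by
  obtain ⟨hD, b, hb, hedge, hadj, ⟨aW, haW⟩, ⟨cE, hcE⟩, -⟩ := h
  have hsadj : ∀ v ∈ D.verts, v ≠ b → D.semiAdj v b := by
    intro v hv hne
    rcases hadj v hv with h | h | h
    · exact absurd h hne
    · exact Or.inl h
    · exact Or.inr h
  have htouch : ∀ x y, D.semiAdj x y → x = b ∨ y = b := by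
    intro x y hxy
    rcases hxy with h | h
    · exact hedge _ h
    · exact (hedge _ h).symm
  refine ⟨hD, ?_, ?_, ?_, b, hb, ⟨aW, haW⟩, ⟨cE, hcE⟩⟩
  · -- weakly connected
    intro u hu v hv
    by_cases huv : u = v
    · exact ⟨[u], ⟨by simp, by simpa using hu, by simp, by simp⟩, by simp, by simp [huv]⟩
    by_cases hub : u = b
    · subst hub
      refine ⟨[u, v], ⟨by simp, ?_, by simp [huv], ?_⟩, by simp, by simp⟩
      · intro x hx; simp at hx; rcases hx with rfl | rfl <;> assumption
      · simp only [List.chain'_cons, List.chain'_singleton, and_true]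
        exact DG.semiAdj_symm (hsadj v hv (Ne.symm huv))
    by_cases hvb : v = b
    · subst hvb
      refine ⟨[u, v], ⟨by simp, ?_, by simp [huv], ?_⟩, by simp, by simp⟩
      · intro x hx; simp at hx; rcases hx with rfl | rfl <;> assumption
      · simp only [List.chain'_cons, List.chain'_singleton, and_true]
        exact hsadj u hu hub
    · refine ⟨[u, b, v], ⟨by simp, ?_, by simp [huv, hub, Ne.symm hvb], ?_⟩, by simp, by simp⟩
      · intro x hx; simp at hx; rcases hx with rfl | rfl | rfl <;> assumption
      · simp only [List.chain'_cons, List.chain'_singleton, and_true]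
        exact ⟨hsadj u hu hub, DG.semiAdj_symm (hsadj v hv hvb)⟩
  · -- asemicyclic
    rintro l ⟨hlen, hmem, hhg, hnd, hch⟩
    match l, hlen, hhg, hnd, hch with
    | x1 :: x2 :: x3 :: y :: t', hlen, hhg, hnd, hch =>
      rw [List.chain'_cons, List.chain'_cons, List.chain'_cons] at hch
      obtain ⟨h12, h23, h34, -⟩ := hch
      have hd1 : x1 ≠ x2 ∧ x1 ≠ x3 ∧ x2 ≠ x3 := by
        have : (x1 :: x2 :: x3 :: y :: t').dropLast = x1 :: x2 :: x3 :: (y :: t').dropLast := by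
          simp
        rw [this] at hnd
        simp [List.nodup_cons] at hnd
        tauto
      have hb2 : x2 = b := by
        rcases htouch x1 x2 h12 with h | h
        · rcases htouch x2 x3 h23 with h' | h'
          · exact h'
          · exact absurd (h.trans h'.symm) hd1.2.1
        · exact h
      have hyb : y = b := by
        rcases htouch x3 y h34 with h | h
        · exact absurd (hb2.trans h.symm) hd1.2.2
        · exact h
      have hy2 : y = x2 := hyb.trans hb2.symm
      match t', hhg, hnd with
      | [], hhg, hnd =>
        simp at hhg hnd
        -- x1 = y
        exact hd1.1 (hhg.trans hy2)
      | z :: t'', hhg, hnd =>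
        have : (x1 :: x2 :: x3 :: y :: z :: t'').dropLast
            = x1 :: x2 :: x3 :: y :: (z :: t'').dropLast := by simp
        rw [this] at hnd
        simp [List.nodup_cons] at hnd
        have h2y : x2 ≠ y := by tauto
        exact h2y hy2.symm
  · -- W-E-functional
    constructor
    · rintro e ⟨he, hW⟩
      have he2 : e.2 = b := by
        rcases hedge e he with h | h
        · exact absurd haW (h ▸ hW.2 aW)
        · exact h
      refine ⟨⟨he, hW⟩, ?_⟩
      intro c hc
      rcases hedge _ hc with h | h
      · simp at h
        exact absurd haW (h ▸ hW.2 aW)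
      · simpa [he2] using h
    · rintro e ⟨he, hE⟩
      have he1 : e.1 = b := by
        rcases hedge e he with h | h
        · exact h
        · exact absurd hcE (h ▸ hE.2 cE)
      refine ⟨⟨he, hE⟩, ?_⟩
      intro c hc
      rcases hedge _ hc with h | h
      · simpa [he1] using h
      · simp at h
        exact absurd hcE (h ▸ hE.2 cE)

/-! ### Cuts of Q-graphs are Q-graphs -/

lemma cut_isQGraph {DW DE : DG} (hQW : IsQGraph DW) (hQE : IsQGraph DE)
    (hdisj : Disjoint DW.verts DE.verts) {eW eE : ℕ × ℕ}
    (heW : DW.funcEEdge eW) (heE : DE.funcWEdge eE) :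
    IsQGraph (DG.cut DW DE eW eE) := by
  obtain ⟨a, b⟩ := eW
  obtain ⟨c, d⟩ := eE
  set C := DG.cut DW DE (a, b) (c, d) with hC
  have hWor := hQW.1
  have hEor := hQE.1
  have hnd : ∀ x, x ∈ DW.verts → x ∈ DE.verts → False := fun x h1 h2 =>
    Finset.disjoint_left.mp hdisj h1 h2
  have haV : a ∈ DW.verts := (hWor.mem_verts heW.1.1).1
  have hbV : b ∈ DW.verts := (hWor.mem_verts heW.1.1).2
  have hcV : c ∈ DE.verts := (hEor.mem_verts heE.1.1).1
  have hdV : d ∈ DE.verts := (hEor.mem_verts heE.1.1).2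
  have hab : a ≠ b := hWor.2.1 _ heW.1.1
  have hcd : c ≠ d := hEor.2.1 _ heE.1.1
  have hbIn : ∀ x, (x, b) ∈ DW.edges → x = a := heW.2
  have hbOut : ∀ x, (b, x) ∉ DW.edges := heW.1.2.2
  have hcOut : ∀ x, (c, x) ∈ DE.edges → x = d := heE.2
  have hcIn : ∀ x, (x, c) ∉ DE.edges := heE.1.2.2
  have ha_inner : DW.isInner a := eedge_start_inner hQW heW.1
  have hd_inner : DE.isInner d := wedge_end_inner hQE heE.1
  have hmemE : ∀ g : ℕ × ℕ, g ∈ C.edges ↔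
      g = (a, d) ∨ (g ∈ DW.edges ∧ g ≠ (a, b)) ∨ (g ∈ DE.edges ∧ g ≠ (c, d)) := by
    intro g
    simp [hC, DG.cut, Finset.mem_insert, Finset.mem_union, Finset.mem_erase]
    tauto
  have hmemV : ∀ v, v ∈ C.verts ↔ (v ∈ DW.verts ∨ v ∈ DE.verts) ∧ v ≠ b ∧ v ≠ c := by
    intro v
    simp [hC, DG.cut, Finset.mem_sdiff]
  have hWb : ∀ g : ℕ × ℕ, g ∈ DW.edges → g ≠ (a, b) → g.1 ≠ b ∧ g.2 ≠ b := by
    intro g hg hne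
    constructor
    · intro h1
      exact hbOut g.2 (by rw [← h1]; exact hg)
    · intro h2
      apply hne
      have := hbIn g.1 (by rw [← h2]; exact hg)
      rw [← this, ← h2]
  have hEc : ∀ g : ℕ × ℕ, g ∈ DE.edges → g ≠ (c, d) → g.1 ≠ c ∧ g.2 ≠ c := by
    intro g hg hne
    constructor
    · intro h1
      apply hne
      have := hcOut g.2 (by rw [← h1]; exact hg)
      rw [← this, ← h1]
    · intro h2
      exact hcIn g.1 (by rw [← h2]; exact hg)
  have hadC : (a, d) ∈ C.edges := (hmemE _).mpr (Or.inl rfl)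
  have haC : a ∈ C.verts := (hmemV a).mpr
    ⟨Or.inl haV, hab, fun h => hnd a haV (by rw [h]; exact hcV)⟩
  have hdC : d ∈ C.verts := (hmemV d).mpr
    ⟨Or.inr hdV, fun h => hnd d (by rw [h]; exact hbV) hdV, Ne.symm hcd⟩
  -- oriented
  have hCor : C.IsOriented := by
    refine ⟨?_, ?_, ?_, ⟨a, haC⟩⟩
    · intro g hg
      rcases (hmemE g).mp hg with rfl | ⟨hg', hne⟩ | ⟨hg', hne⟩
      · exact ⟨haC, hdC⟩
      · have hv := hWor.mem_verts hg'
        have hnb := hWb g hg' hne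
        exact ⟨(hmemV _).mpr ⟨Or.inl hv.1, hnb.1, fun h => hnd _ hv.1 (by rw [h]; exact hcV)⟩,
          (hmemV _).mpr ⟨Or.inl hv.2, hnb.2, fun h => hnd _ hv.2 (by rw [h]; exact hcV)⟩⟩
      · have hv := hEor.mem_verts hg'
        have hnc := hEc g hg' hne
        exact ⟨(hmemV _).mpr ⟨Or.inr hv.1, fun h => hnd _ (by rw [h]; exact hbV) hv.1, hnc.1⟩,
          (hmemV _).mpr ⟨Or.inr hv.2, fun h => hnd _ (by rw [h]; exact hbV) hv.2, hnc.2⟩⟩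
    · intro g hg
      rcases (hmemE g).mp hg with rfl | ⟨hg', _⟩ | ⟨hg', _⟩
      · exact fun h => hnd a haV (by rw [show a = d from h]; exact hdV)
      · exact hWor.2.1 g hg'
      · exact hEor.2.1 g hg'
    · intro x y hxy hyx
      rcases (hmemE _).mp hxy with h1 | ⟨h1, _⟩ | ⟨h1, _⟩ <;>
        rcases (hmemE _).mp hyx with h2 | ⟨h2, _⟩ | ⟨h2, _⟩
      · simp at h1 h2
        exact hnd a haV (by rw [← h2.1, h1.2]; exact hdV)
      · simp at h1
        refine hnd y (hWor.mem_verts h2).1 (by rw [h1.2]; exact hdV)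
      · simp at h1
        exact hnd x (by rw [h1.1]; exact haV) (hEor.mem_verts h2).2
      · simp at h2
        exact hnd x (hWor.mem_verts h1).1 (by rw [h2.2]; exact hdV)
      · exact hWor.2.2.1 x y h1 h2
      · exact hnd x (hWor.mem_verts h1).1 (hEor.mem_verts h2).2
      · simp at h2
        exact hnd y (by rw [h2.1]; exact haV) (hEor.mem_verts h1).2
      · exact hnd y (hWor.mem_verts h2).1 (hEor.mem_verts h1).2
      · exact hEor.2.2.1 x y h1 h2
  -- transfer of semipaths
  have hW2C : ∀ l, DW.IsSemipath l → b ∉ l → C.IsSemipath l := by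
    intro l hl hbl
    refine ⟨hl.1, ?_, hl.2.2.1, ?_⟩
    · intro x hx
      exact (hmemV x).mpr ⟨Or.inl (hl.2.1 x hx), fun h => hbl (h ▸ hx),
        fun h => hnd x (hl.2.1 x hx) (h ▸ hcV)⟩
    · refine chain'_imp_mem hl.2.2.2 ?_
      intro x hx y hy hxy
      rcases hxy with h | h
      · exact Or.inl ((hmemE _).mpr (Or.inr (Or.inl ⟨h, fun hh =>
          hbl (by rw [show y = b from psnd hh] at hy; exact hy)⟩)))
      · exact Or.inr ((hmemE _).mpr (Or.inr (Or.inl ⟨h, fun hh =>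
          hbl (by rw [show x = b from psnd hh] at hx; exact hx)⟩)))
  have hE2C : ∀ l, DE.IsSemipath l → c ∉ l → C.IsSemipath l := by
    intro l hl hcl
    refine ⟨hl.1, ?_, hl.2.2.1, ?_⟩
    · intro x hx
      exact (hmemV x).mpr ⟨Or.inr (hl.2.1 x hx), fun h => hnd x (h ▸ hbV) (hl.2.1 x hx),
        fun h => hcl (h ▸ hx)⟩
    · refine chain'_imp_mem hl.2.2.2 ?_
      intro x hx y hy hxy
      rcases hxy with h | h
      · exact Or.inl ((hmemE _).mpr (Or.inr (Or.inr ⟨h, fun hh =>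
          hcl (by rw [show x = c from pfst hh] at hx; exact hx)⟩)))
      · exact Or.inr ((hmemE _).mpr (Or.inr (Or.inr ⟨h, fun hh =>
          hcl (by rw [show y = c from pfst hh] at hy; exact hy)⟩)))
  have hreachW : ∀ u v, u ∈ DW.verts → v ∈ DW.verts → u ≠ b → v ≠ b → Reach C u v := by
    intro u v hu hv hub hvb
    obtain ⟨l, hl, hh, hg⟩ := hQW.2.1 u hu v hv
    have hbl : b ∉ l := by
      refine semipath_avoid (a0 := a) ?_ hl ?_ ?_
      · intro x hx
        rcases hx with h | h
        · exact absurd h (hbOut x)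
        · exact hbIn x h
      · rw [hh]; simpa using hub
      · rw [hg]; simpa using hvb
    exact ⟨l, hW2C l hl hbl, hh, hg⟩
  have hreachE : ∀ u v, u ∈ DE.verts → v ∈ DE.verts → u ≠ c → v ≠ c → Reach C u v := by
    intro u v hu hv huc hvc
    obtain ⟨l, hl, hh, hg⟩ := hQE.2.1 u hu v hv
    have hcl : c ∉ l := by
      refine semipath_avoid (a0 := d) ?_ hl ?_ ?_
      · intro x hx
        rcases hx with h | h
        · exact hcOut x h
        · exact absurd h (hcIn x)
      · rw [hh]; simpa using huc
      · rw [hg]; simpa using hvc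
    exact ⟨l, hE2C l hl hcl, hh, hg⟩
  have hreachAD : Reach C a d := by
    refine ⟨[a, d], ⟨by simp, ?_, ?_, ?_⟩, by simp, by simp⟩
    · intro x hx; simp at hx; rcases hx with rfl | rfl
      · exact haC
      · exact hdC
    · simp only [List.nodup_cons, List.mem_singleton, List.not_mem_nil,
        not_false_iff, and_true, List.nodup_nil]
      exact fun h => hnd a haV (by rw [h]; exact hdV)
    · simp only [List.chain'_cons, List.chain'_singleton, and_true]
      exact Or.inl hadC
  refine ⟨hCor, ?_, ?_, ?_, a, haC, ?_, ⟨d, hadC⟩⟩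
  · -- weakly connected
    intro u hu v hv
    obtain ⟨huW, hub, huc⟩ := (hmemV u).mp hu
    obtain ⟨hvW, hvb, hvc⟩ := (hmemV v).mp hv
    rcases huW with huW | huE <;> rcases hvW with hvW | hvE
    · exact hreachW u v huW hvW hub hvb
    · exact reach_trans (reach_trans (hreachW u a huW haV hub hab)
        hreachAD) (hreachE d v hdV hvE (Ne.symm hcd) hvc)
    · exact reach_trans (reach_trans (hreachE u d huE hdV huc (Ne.symm hcd))
        (reach_symm hreachAD)) (hreachW a v haV hvW hab hvb)
    · exact hreachE u v huE hvE huc hvc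
  · -- asemicyclic
    rintro l ⟨hlen, hmem, hhg, hndp, hch⟩
    by_cases hallW : ∀ x ∈ l, x ∈ DW.verts
    · refine hQW.2.2.1 l ⟨hlen, hallW, hhg, hndp, ?_⟩
      refine chain'_imp_mem hch ?_
      intro x hx y hy hxy
      rcases hxy with h | h
      · rcases (hmemE _).mp h with h1 | ⟨h1, _⟩ | ⟨h1, _⟩
        · exact absurd (hallW y hy) (by
            rw [show y = d from psnd h1]
            exact fun hh => hnd d hh hdV)
        · exact Or.inl h1
        · exact absurd (hallW x hx) (fun hh => hnd x hh (hEor.mem_verts h1).1)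
      · rcases (hmemE _).mp h with h1 | ⟨h1, _⟩ | ⟨h1, _⟩
        · exact absurd (hallW x hx) (by
            rw [show x = d from psnd h1]
            exact fun hh => hnd d hh hdV)
        · exact Or.inr h1
        · exact absurd (hallW y hy) (fun hh => hnd y hh (hEor.mem_verts h1).1)
    · by_cases hallE : ∀ x ∈ l, x ∈ DE.verts
      · refine hQE.2.2.1 l ⟨hlen, hallE, hhg, hndp, ?_⟩
        refine chain'_imp_mem hch ?_
        intro x hx y hy hxy
        rcases hxy with h | h
        · rcases (hmemE _).mp h with h1 | ⟨h1, _⟩ | ⟨h1, _⟩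
          · exact absurd (hallE x hx) (by
              rw [show x = a from pfst h1]
              exact fun hh => hnd a haV hh)
          · exact absurd (hallE x hx) (fun hh => hnd x (hWor.mem_verts h1).1 hh)
          · exact Or.inl h1
        · rcases (hmemE _).mp h with h1 | ⟨h1, _⟩ | ⟨h1, _⟩
          · exact absurd (hallE y hy) (by
              rw [show y = a from pfst h1]
              exact fun hh => hnd a haV hh)
          · exact absurd (hallE y hy) (fun hh => hnd y (hWor.mem_verts h1).1 hh)
          · exact Or.inr h1
      · push_neg at hallW hallE
        obtain ⟨y0, hy0l, hy0⟩ := hallW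
        obtain ⟨x0, hx0l, hx0⟩ := hallE
        have hx0W : x0 ∈ DW.verts := by
          rcases ((hmemV x0).mp (hmem x0 hx0l)).1 with h | h
          · exact h
          · exact absurd h hx0
        refine no_bridge (R := C.semiAdj) (P := fun x => x ∈ DW.verts) (A := a) (D0 := d)
          (fun u v h => DG.semiAdj_symm h) ?_ hlen hhg hndp hch ⟨x0, hx0l, hx0W⟩
          ⟨y0, hy0l, hy0⟩
        intro u v huv hu hv
        rcases huv with h | h
        · rcases (hmemE _).mp h with h1 | ⟨h1, _⟩ | ⟨h1, _⟩
          · exact ⟨pfst h1, psnd h1⟩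
          · exact absurd (hWor.mem_verts h1).2 hv
          · exact absurd hu (fun hh => hnd u hh (hEor.mem_verts h1).1)
        · rcases (hmemE _).mp h with h1 | ⟨h1, _⟩ | ⟨h1, _⟩
          · exact absurd hv (by
              rw [show v = a from pfst h1]
              exact fun hh => hh haV)
          · exact absurd (hWor.mem_verts h1).1 hv
          · exact absurd hu (fun hh => hnd u hh (hEor.mem_verts h1).2)
  · -- W-E-functional
    constructor
    · rintro g ⟨hg, hgW⟩
      have hg1d : g.1 ≠ d := by
        intro h
        exact hgW.2 a (h ▸ hadC)
      rcases (hmemE g).mp hg with h1 | ⟨h1, hne⟩ | ⟨h1, hne⟩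
      · exfalso
        obtain ⟨x, hx⟩ := ha_inner.2.1
        refine hgW.2 x ((hmemE _).mpr (Or.inr (Or.inl ⟨by
          rw [show g.1 = a from pfst h1]; exact hx, ?_⟩)))
        intro hh
        have hxa : x = a := pfst hh
        have hab2 : a = b := by
          have : g.1 = b := psnd hh
          rw [show g.1 = a from pfst h1] at this
          exact this
        exact hab hab2
      · -- a W-edge of DW
        have hg1b : g.1 ≠ b := (hWb g h1 hne).1
        have hWv : DW.isWVert g.1 := by
          refine ⟨(hWor.mem_verts h1).1, fun x hx => ?_⟩
          refine hgW.2 x ((hmemE _).mpr (Or.inr (Or.inl ⟨hx, fun hh => hg1b (psnd hh)⟩)))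
        have hfw := hQW.2.2.2.1.1 g ⟨h1, hWv⟩
        refine ⟨⟨hg, hgW⟩, fun c' hc' => ?_⟩
        rcases (hmemE _).mp hc' with h2 | ⟨h2, _⟩ | ⟨h2, _⟩
        · exfalso
          obtain ⟨x, hx⟩ := ha_inner.2.1
          exact hWv.2 x (by
            rw [show g.1 = a from pfst h2]
            exact hx)
        · exact hfw.2 c' h2
        · exact absurd (hEor.mem_verts h2).1 (fun hh => hnd _ hWv.1 hh)
      · -- a W-edge of DE
        have hg1c : g.1 ≠ c := (hEc g h1 hne).1
        have hWv : DE.isWVert g.1 := by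
          refine ⟨(hEor.mem_verts h1).1, fun x hx => ?_⟩
          refine hgW.2 x ((hmemE _).mpr (Or.inr (Or.inr ⟨hx, fun hh => hg1d (psnd hh)⟩)))
        have hfw := hQE.2.2.2.1.1 g ⟨h1, hWv⟩
        refine ⟨⟨hg, hgW⟩, fun c' hc' => ?_⟩
        rcases (hmemE _).mp hc' with h2 | ⟨h2, _⟩ | ⟨h2, _⟩
        · exfalso
          refine hnd g.1 ?_ hWv.1
          rw [show g.1 = a from pfst h2]
          exact haV
        · exact absurd (hWor.mem_verts h2).1 (fun hh => hnd _ hh hWv.1)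
        · exact hfw.2 c' h2
    · rintro g ⟨hg, hgE⟩
      have hg2a : g.2 ≠ a := by
        intro h
        exact hgE.2 d (h ▸ hadC)
      rcases (hmemE g).mp hg with h1 | ⟨h1, hne⟩ | ⟨h1, hne⟩
      · exfalso
        obtain ⟨y, hy⟩ := hd_inner.2.2
        refine hgE.2 y ((hmemE _).mpr (Or.inr (Or.inr ⟨by
          rw [show g.2 = d from psnd h1]; exact hy, ?_⟩)))
        intro hh
        have hcd2 : c = d := by
          have h3 : g.2 = c := pfst hh
          rw [show g.2 = d from psnd h1] at h3
          exact h3.symm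
        exact hcd hcd2
      · -- an E-edge of DW
        have hg2b : g.2 ≠ b := (hWb g h1 hne).2
        have hEv : DW.isEVert g.2 := by
          refine ⟨(hWor.mem_verts h1).2, fun x hx => ?_⟩
          refine hgE.2 x ((hmemE _).mpr (Or.inr (Or.inl ⟨hx, fun hh => hg2a (pfst hh)⟩)))
        have hfe := hQW.2.2.2.1.2 g ⟨h1, hEv⟩
        refine ⟨⟨hg, hgE⟩, fun c' hc' => ?_⟩
        rcases (hmemE _).mp hc' with h2 | ⟨h2, _⟩ | ⟨h2, _⟩
        · exfalso
          refine hnd g.2 hEv.1 ?_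
          rw [show g.2 = d from psnd h2]
          exact hdV
        · exact hfe.2 c' h2
        · exact absurd (hEor.mem_verts h2).2 (fun hh => hnd _ hEv.1 hh)
      · -- an E-edge of DE
        have hg2d : g.2 ≠ d := by
          intro h
          obtain ⟨y, hy⟩ := hd_inner.2.2
          refine hgE.2 y ((hmemE _).mpr (Or.inr (Or.inr ⟨by rw [h]; exact hy,
            fun hh => hcd ?_⟩)))
          have h3 : g.2 = c := pfst hh
          rw [h] at h3
          exact h3.symm
        have hEv : DE.isEVert g.2 := by
          refine ⟨(hEor.mem_verts h1).2, fun x hx => ?_⟩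
          refine hgE.2 x ((hmemE _).mpr (Or.inr (Or.inr ⟨hx,
            fun hh => (hEc g h1 hne).2 (pfst hh)⟩)))
        have hfe := hQE.2.2.2.1.2 g ⟨h1, hEv⟩
        refine ⟨⟨hg, hgE⟩, fun c' hc' => ?_⟩
        rcases (hmemE _).mp hc' with h2 | ⟨h2, _⟩ | ⟨h2, _⟩
        · exact absurd (psnd h2) hg2d
        · exact absurd (hWor.mem_verts h2).2 (fun hh => hnd _ hh hEv.1)
        · exact hfe.2 c' h2
  · -- a has an in-edge in C
    obtain ⟨x, hx⟩ := ha_inner.2.1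
    refine ⟨x, (hmemE _).mpr (Or.inr (Or.inl ⟨hx, fun hh => hab ?_⟩))⟩
    have h2 : a = b := psnd hh
    exact h2

lemma constructionQ_isQ {G : CTree} (h : IsConstructionQ G) : IsQGraph G.rootGraph := by
  induction h with
  | leaf D ε hB => exact basicQ_isQ hB
  | node D ε eW eE GW GE hW hE hdisj heW heE hD hXYC hεW hεE ihW ihE =>
    show IsQGraph D
    rw [hD]
    exact cut_isQGraph ihW ihE hdisj heW heE

lemma reach_step {H : DG} {a u v : ℕ} (hu : Reach H a u) (huv : H.semiAdj u v)
    (hv : v ∈ H.verts) : Reach H a v := by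
  obtain ⟨l, hl, hh, hg⟩ := hu
  by_cases hvl : v ∈ l
  · obtain ⟨r, hr, h1, h2, _⟩ := reach_mem hl hh hvl
    exact ⟨r, hr, h1, h2⟩
  · refine ⟨l ++ [v], semipath_append hl ⟨by simp, by simpa using hv, by simp, by simp⟩
      (by intro x hx h; simp at h; subst h; exact hvl hx) ?_, ?_, by simp⟩
    · intro x hx y hy
      simp at hy; subst hy
      rw [hg] at hx; simp at hx; subst hx
      exact huv
    · rw [head?_append_left hl.1]; exact hh

/-! ### Splitting a Q-graph along an inner edge -/

lemma DG.ext' {D1 D2 : DG} (hv : D1.verts = D2.verts) (he : D1.edges = D2.edges) :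
    D1 = D2 := by
  cases D1; cases D2; simp_all

open scoped Classical in
lemma split_spec {D : DG} (hQ : IsQGraph D) {a d : ℕ} (had : (a, d) ∈ D.edges)
    (ha : D.isInner a) (hd : D.isInner d) :
    ∃ (DW DE : DG) (b c : ℕ),
      IsQGraph DW ∧ IsQGraph DE ∧
      Disjoint DW.verts DE.verts ∧
      DW.funcEEdge (a, b) ∧ DE.funcWEdge (c, d) ∧
      D = DG.cut DW DE (a, b) (c, d) ∧
      DW.verts.card < D.verts.card ∧ DE.verts.card < D.verts.card ∧
      b ∉ D.verts ∧ c ∉ D.verts ∧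
      (∀ e, D.funcEEdge e → DW.funcEEdge e ∨ DE.funcEEdge e) ∧
      (∀ w, D.funcWEdge w → DW.funcWEdge w ∨ DE.funcWEdge w) := by
  classical
  obtain ⟨hD, hWC, hAC, hWE, -⟩ := hQ
  have hQ' : IsQGraph D := ⟨hD, hWC, hAC, hWE, a, ha⟩
  have hadne : a ≠ d := hD.2.1 _ had
  set M := D.verts.sup id with hM
  set b := M + 1 with hb
  set c := M + 2 with hc
  have hle : ∀ v ∈ D.verts, v ≤ M := fun v hv => Finset.le_sup (f := id) hv
  have hbV : b ∉ D.verts := fun h => by have := hle b h; omega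
  have hcV : c ∉ D.verts := fun h => by have := hle c h; omega
  have hbc : b ≠ c := by omega
  set D' : DG := ⟨D.verts, D.edges.erase (a, d)⟩ with hD'
  have hD'edges : ∀ g : ℕ × ℕ, g ∈ D'.edges ↔ g ∈ D.edges ∧ g ≠ (a, d) := by
    intro g; simp [hD', Finset.mem_erase]; tauto
  have hD'verts : D'.verts = D.verts := rfl
  have hD'memverts : ∀ g : ℕ × ℕ, g ∈ D'.edges → g.1 ∈ D.verts ∧ g.2 ∈ D.verts :=
    fun g hg => hD.mem_verts ((hD'edges g).mp hg).1
  set compW := D.verts.filter (fun v => Reach D' a v) with hcompW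
  set compE := D.verts.filter (fun v => Reach D' d v) with hcompE
  have hmemW : ∀ v, v ∈ compW ↔ v ∈ D.verts ∧ Reach D' a v := by
    intro v; simp [hcompW]
  have hmemE : ∀ v, v ∈ compE ↔ v ∈ D.verts ∧ Reach D' d v := by
    intro v; simp [hcompE]
  have haW : a ∈ compW := (hmemW a).mpr ⟨ha.1, reach_refl ha.1⟩
  have hdE : d ∈ compE := (hmemE d).mpr ⟨hd.1, reach_refl hd.1⟩
  -- closure of the two components under `D'`-semi-adjacency
  have hclW : ∀ u v, u ∈ compW → D'.semiAdj u v → v ∈ compW := by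
    intro u v hu huv
    have hvv : v ∈ D.verts := by
      rcases huv with h | h
      · exact (hD'memverts _ h).2
      · exact (hD'memverts _ h).1
    exact (hmemW v).mpr ⟨hvv, reach_step ((hmemW u).mp hu).2 huv hvv⟩
  have hclE : ∀ u v, u ∈ compE → D'.semiAdj u v → v ∈ compE := by
    intro u v hu huv
    have hvv : v ∈ D.verts := by
      rcases huv with h | h
      · exact (hD'memverts _ h).2
      · exact (hD'memverts _ h).1
    exact (hmemE v).mpr ⟨hvv, reach_step ((hmemE u).mp hu).2 huv hvv⟩
  -- no reach from a to d in D'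
  have hnAD : ¬ Reach D' a d := by
    rintro ⟨l, hl, hh, hg⟩
    match l, hh, hg with
    | [x], hh, hg =>
      simp at hh hg
      exact hadne (by rw [← hh, hg])
    | [x, y], hh, hg =>
      simp at hh hg
      have hch := hl.2.2.2
      rw [List.chain'_cons] at hch
      have hxy := hch.1
      rw [hh, hg] at hxy
      rcases hxy with h | h
      · exact ((hD'edges _).mp h).2 rfl
      · exact hD.2.2.1 a d had ((hD'edges _).mp h).1
    | x :: y :: z :: t, hh, hg =>
      simp at hh
      refine hAC ((x :: y :: z :: t) ++ [x]) ⟨by simp, ?_, ?_, ?_, ?_⟩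
      · intro v hv
        refine hl.2.1 v ?_
        simp at hv ⊢
        tauto
      · rw [List.getLast?_concat]
        simp
      · rw [List.dropLast_concat]
        exact hl.2.2.1
      · rw [List.chain'_append]
        refine ⟨hl.2.2.2.imp (fun u v h => ?_), by simp, ?_⟩
        · rcases h with h | h
          · exact Or.inl ((hD'edges _).mp h).1
          · exact Or.inr ((hD'edges _).mp h).1
        · intro u hu v hv
          simp at hv; subst hv
          rw [hg] at hu
          simp at hu; subst hu
          rw [hh]
          exact Or.inr had
  have hdisjWE : ∀ v, v ∈ compW → v ∈ compE → False := by
    intro v hvW hvE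
    exact hnAD (reach_trans ((hmemW v).mp hvW).2 (reach_symm ((hmemE v).mp hvE).2))
  -- every vertex is in one of the components
  have hunion : ∀ v ∈ D.verts, v ∈ compW ∨ v ∈ compE := by
    intro v hv
    have hstep : ∀ x y, D.semiAdj x y → (x ∈ compW ∨ x ∈ compE) →
        (y ∈ compW ∨ y ∈ compE) := by
      intro x y hxy hx
      by_cases hxy_ad : (x = a ∧ y = d) ∨ (x = d ∧ y = a)
      · rcases hxy_ad with ⟨_, rfl⟩ | ⟨_, rfl⟩
        · exact Or.inr hdE
        · exact Or.inl haW
      · have hadj' : D'.semiAdj x y := by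
          rcases hxy with h | h
          · refine Or.inl ((hD'edges _).mpr ⟨h, fun hh => ?_⟩)
            exact hxy_ad (Or.inl ⟨pfst hh, psnd hh⟩)
          · refine Or.inr ((hD'edges _).mpr ⟨h, fun hh => ?_⟩)
            exact hxy_ad (Or.inr ⟨psnd hh, pfst hh⟩)
        rcases hx with hx | hx
        · exact Or.inl (hclW x y hx hadj')
        · exact Or.inr (hclE x y hx hadj')
    obtain ⟨l, hl, hh, hg⟩ := hWC a ha.1 v hv
    refine chain_all (R := D.semiAdj) (P := fun x => x ∈ compW ∨ x ∈ compE)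
      (fun x y hxy => ⟨hstep x y hxy, hstep y x (DG.semiAdj_symm hxy)⟩) l hl.2.2.2
      a (List.mem_of_mem_head? hh) (Or.inl haW) v ?_
    have := List.mem_of_mem_head? (l := l.reverse) (by rw [List.head?_reverse]; exact hg)
    simpa using this
  -- the two subgraphs
  set filtW := D.edges.filter (fun g => g.1 ∈ compW ∧ g.2 ∈ compW) with hfiltW
  set filtE := D.edges.filter (fun g => g.1 ∈ compE ∧ g.2 ∈ compE) with hfiltE
  set DW : DG := ⟨insert b compW, insert (a, b) filtW⟩ with hDW
  set DE : DG := ⟨insert c compE, insert (c, d) filtE⟩ with hDE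
  have hWsub : compW ⊆ D.verts := fun v hv => ((hmemW v).mp hv).1
  have hEsub : compE ⊆ D.verts := fun v hv => ((hmemE v).mp hv).1
  have hbW : b ∉ compW := fun h => hbV (hWsub h)
  have hcE : c ∉ compE := fun h => hcV (hEsub h)
  have hmemDW : ∀ g : ℕ × ℕ, g ∈ DW.edges ↔
      g = (a, b) ∨ (g ∈ D.edges ∧ g.1 ∈ compW ∧ g.2 ∈ compW) := by
    intro g
    simp [hDW, hfiltW, Finset.mem_insert, Finset.mem_filter]
  have hmemDE : ∀ g : ℕ × ℕ, g ∈ DE.edges ↔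
      g = (c, d) ∨ (g ∈ D.edges ∧ g.1 ∈ compE ∧ g.2 ∈ compE) := by
    intro g
    simp [hDE, hfiltE, Finset.mem_insert, Finset.mem_filter]
  have hvertDW : ∀ v, v ∈ DW.verts ↔ v = b ∨ v ∈ compW := by
    intro v; simp [hDW]
  have hvertDE : ∀ v, v ∈ DE.verts ↔ v = c ∨ v ∈ compE := by
    intro v; simp [hDE]
  have hedge_side : ∀ g ∈ D.edges, g ≠ (a, d) →
      (g.1 ∈ compW ∧ g.2 ∈ compW) ∨ (g.1 ∈ compE ∧ g.2 ∈ compE) := by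
    intro g hg hne
    have h1 : g.1 ∈ D.verts := (hD.mem_verts hg).1
    have heta : (g.1, g.2) = g := rfl
    have hadj : D'.semiAdj g.1 g.2 :=
      Or.inl ((hD'edges _).mpr ⟨by rw [heta]; exact hg, by rw [heta]; exact hne⟩)
    rcases hunion g.1 h1 with h | h
    · exact Or.inl ⟨h, hclW _ _ h hadj⟩
    · exact Or.inr ⟨h, hclE _ _ h hadj⟩
  obtain ⟨xa, hxa⟩ := ha.2.1
  have hxa_ne : (xa, a) ≠ (a, d) := fun h => hadne (psnd h)
  have hxaW : xa ∈ compW ∧ a ∈ compW := by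
    rcases hedge_side (xa, a) hxa hxa_ne with h | h
    · exact h
    · exact absurd h.2 (fun hh => hdisjWE a haW hh)
  have hxaDW : (xa, a) ∈ DW.edges := (hmemDW _).mpr (Or.inr ⟨hxa, hxaW.1, hxaW.2⟩)
  obtain ⟨zd, hzd⟩ := hd.2.2
  have hzd_ne : (d, zd) ≠ (a, d) := fun h => hadne (pfst h).symm
  have hzdE : d ∈ compE ∧ zd ∈ compE := by
    rcases hedge_side (d, zd) hzd hzd_ne with h | h
    · exact absurd h.1 (fun hh => hdisjWE d hh hdE)
    · exact h
  have hzdDE : (d, zd) ∈ DE.edges := (hmemDE _).mpr (Or.inr ⟨hzd, hzdE.1, hzdE.2⟩)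
  have habne : a ≠ b := fun h => hbV (h ▸ ha.1)
  have hcdne' : c ≠ d := fun h => hcV (h ▸ hd.1)
  -- reachability inside the pieces
  have hreachDW : ∀ u v, u ∈ compW → v ∈ compW → Reach DW u v := by
    intro u v hu hv
    obtain ⟨r, hr, hrh, hrg⟩ :=
      reach_trans (reach_symm ((hmemW u).mp hu).2) ((hmemW v).mp hv).2
    have hall : ∀ x ∈ r, x ∈ compW := fun x hx =>
      chain_all (R := D'.semiAdj) (P := (· ∈ compW))
        (fun x y hxy => ⟨fun h => hclW _ _ h hxy, fun h => hclW _ _ h (DG.semiAdj_symm hxy)⟩)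
        r hr.2.2.2 u (List.mem_of_mem_head? hrh) hu x hx
    refine ⟨r, ⟨hr.1, fun x hx => (hvertDW x).mpr (Or.inr (hall x hx)), hr.2.2.1, ?_⟩, hrh, hrg⟩
    refine chain'_imp_mem hr.2.2.2 ?_
    intro x hx y hy hxy
    rcases hxy with h | h
    · exact Or.inl ((hmemDW _).mpr (Or.inr ⟨((hD'edges _).mp h).1, hall x hx, hall y hy⟩))
    · exact Or.inr ((hmemDW _).mpr (Or.inr ⟨((hD'edges _).mp h).1, hall y hy, hall x hx⟩))
  have hreachDE : ∀ u v, u ∈ compE → v ∈ compE → Reach DE u v := by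
    intro u v hu hv
    obtain ⟨r, hr, hrh, hrg⟩ :=
      reach_trans (reach_symm ((hmemE u).mp hu).2) ((hmemE v).mp hv).2
    have hall : ∀ x ∈ r, x ∈ compE := fun x hx =>
      chain_all (R := D'.semiAdj) (P := (· ∈ compE))
        (fun x y hxy => ⟨fun h => hclE _ _ h hxy, fun h => hclE _ _ h (DG.semiAdj_symm hxy)⟩)
        r hr.2.2.2 u (List.mem_of_mem_head? hrh) hu x hx
    refine ⟨r, ⟨hr.1, fun x hx => (hvertDE x).mpr (Or.inr (hall x hx)), hr.2.2.1, ?_⟩, hrh, hrg⟩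
    refine chain'_imp_mem hr.2.2.2 ?_
    intro x hx y hy hxy
    rcases hxy with h | h
    · exact Or.inl ((hmemDE _).mpr (Or.inr ⟨((hD'edges _).mp h).1, hall x hx, hall y hy⟩))
    · exact Or.inr ((hmemDE _).mpr (Or.inr ⟨((hD'edges _).mp h).1, hall y hy, hall x hx⟩))
  have habDW : (a, b) ∈ DW.edges := (hmemDW _).mpr (Or.inl rfl)
  have hcdDE : (c, d) ∈ DE.edges := (hmemDE _).mpr (Or.inl rfl)
  have hreachAB : Reach DW a b := by
    refine ⟨[a, b], ⟨by simp, ?_, by simp [habne], ?_⟩, by simp, by simp⟩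
    · intro x hx
      simp at hx
      rcases hx with rfl | rfl
      · exact (hvertDW _).mpr (Or.inr haW)
      · exact (hvertDW _).mpr (Or.inl rfl)
    · simp only [List.chain'_cons, List.chain'_singleton, and_true]
      exact Or.inl habDW
  have hreachCD : Reach DE c d := by
    refine ⟨[c, d], ⟨by simp, ?_, by simp [hcdne'], ?_⟩, by simp, by simp⟩
    · intro x hx
      simp at hx
      rcases hx with rfl | rfl
      · exact (hvertDE _).mpr (Or.inl rfl)
      · exact (hvertDE _).mpr (Or.inr hdE)
    · simp only [List.chain'_cons, List.chain'_singleton, and_true]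
      exact Or.inl hcdDE
  -- DW is a Q-graph
  have hQW : IsQGraph DW := by
    refine ⟨⟨?_, ?_, ?_, ⟨a, (hvertDW a).mpr (Or.inr haW)⟩⟩, ?_, ?_, ⟨?_, ?_⟩,
      a, (hvertDW a).mpr (Or.inr haW), ⟨xa, hxaDW⟩, ⟨b, habDW⟩⟩
    · intro g hg
      rcases (hmemDW g).mp hg with rfl | ⟨hg', h1, h2⟩
      · exact ⟨(hvertDW a).mpr (Or.inr haW), (hvertDW b).mpr (Or.inl rfl)⟩
      · exact ⟨(hvertDW _).mpr (Or.inr h1), (hvertDW _).mpr (Or.inr h2)⟩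
    · intro g hg
      rcases (hmemDW g).mp hg with rfl | ⟨hg', _, _⟩
      · exact habne
      · exact hD.2.1 g hg'
    · intro x y hxy hyx
      rcases (hmemDW _).mp hxy with h1 | ⟨h1, h1a, h1b⟩ <;>
        rcases (hmemDW _).mp hyx with h2 | ⟨h2, h2a, h2b⟩
      · exact habne ((pfst h1).symm.trans (psnd h2))
      · refine hbW ?_
        have hyb : y = b := psnd h1
        rw [← hyb]; exact h2a
      · refine hbW ?_
        have hxb : x = b := psnd h2
        rw [← hxb]; exact h1a
      · exact hD.2.2.1 x y h1 h2
    · -- weakly connected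
      intro u hu v hv
      rcases (hvertDW u).mp hu with rfl | hu' <;> rcases (hvertDW v).mp hv with rfl | hv'
      · exact reach_refl hu
      · exact reach_trans (reach_symm hreachAB) (hreachDW a v haW hv')
      · exact reach_trans (hreachDW u a hu' haW) hreachAB
      · exact hreachDW u v hu' hv'
    · -- asemicyclic
      rintro l ⟨hlen, hmem, hhg, hndp, hch⟩
      by_cases hbl : b ∈ l
      · have hx2 : ∃ x ∈ l, x ≠ b := by
          match l, hlen, hndp with
          | x1 :: x2 :: x3 :: x4 :: t, _, hndp =>
            have h12 : x1 ≠ x2 := by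
              have heq : (x1 :: x2 :: x3 :: x4 :: t).dropLast
                  = x1 :: x2 :: x3 :: (x4 :: t).dropLast := by simp
              rw [heq] at hndp
              simp [List.nodup_cons] at hndp
              tauto
            by_cases h1b : x1 = b
            · exact ⟨x2, by simp, fun hh => h12 (h1b.trans hh.symm)⟩
            · exact ⟨x1, by simp, h1b⟩
        obtain ⟨x0, hx0l, hx0⟩ := hx2
        refine no_bridge (R := DW.semiAdj) (P := fun x => x ≠ b) (A := a) (D0 := b)
          (fun u v h => DG.semiAdj_symm h) ?_ hlen hhg hndp hch ⟨x0, hx0l, hx0⟩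
          ⟨b, hbl, by simp⟩
        intro u v huv hu hv
        have hvb : v = b := not_not.mp hv
        subst hvb
        rcases huv with h | h
        · rcases (hmemDW _).mp h with h1 | ⟨h1', h1a, h1b⟩
          · exact ⟨pfst h1, rfl⟩
          · exact absurd h1b hbW
        · rcases (hmemDW _).mp h with h1 | ⟨h1', h1a, h1b⟩
          · exact absurd (pfst h1).symm habne
          · exact absurd h1a hbW
      · refine hAC l ⟨hlen, ?_, hhg, hndp, ?_⟩
        · intro x hx
          rcases (hvertDW x).mp (hmem x hx) with rfl | h
          · exact absurd hx hbl
          · exact hWsub h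
        · refine chain'_imp_mem hch ?_
          intro x hx y hy hxy
          rcases hxy with h | h
          · rcases (hmemDW _).mp h with h1 | ⟨h1, _, _⟩
            · exact absurd (by rw [← show y = b from psnd h1]; exact hy : b ∈ l) hbl
            · exact Or.inl h1
          · rcases (hmemDW _).mp h with h1 | ⟨h1, _, _⟩
            · exact absurd (by rw [← show x = b from psnd h1]; exact hx : b ∈ l) hbl
            · exact Or.inr h1
    · -- functional W-edges
      rintro g ⟨hg, hWv⟩
      rcases (hmemDW g).mp hg with h1 | ⟨h1, h1a, h1b⟩
      · exact absurd (by rw [show g.1 = a from pfst h1]; exact hxaDW : (xa, g.1) ∈ DW.edges)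
          (hWv.2 xa)
      · have hWvD : D.isWVert g.1 := by
          refine ⟨(hD.mem_verts h1).1, fun x hx => ?_⟩
          have hne : (x, g.1) ≠ (a, d) := by
            intro hh
            exact hdisjWE g.1 h1a (by rw [show g.1 = d from psnd hh]; exact hdE)
          have hxW : x ∈ compW := hclW g.1 x h1a (Or.inr ((hD'edges _).mpr ⟨hx, hne⟩))
          exact hWv.2 x ((hmemDW _).mpr (Or.inr ⟨hx, hxW, h1a⟩))
        have hfw := hWE.1 g ⟨h1, hWvD⟩
        refine ⟨⟨hg, hWv⟩, fun c' hc' => ?_⟩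
        rcases (hmemDW _).mp hc' with h2 | ⟨h2, _, _⟩
        · exact absurd (by rw [show g.1 = a from pfst h2]; exact hxaDW : (xa, g.1) ∈ DW.edges)
            (hWv.2 xa)
        · exact hfw.2 c' h2
    · -- functional E-edges
      rintro g ⟨hg, hEv⟩
      rcases (hmemDW g).mp hg with h1 | ⟨h1, h1a, h1b⟩
      · refine ⟨⟨hg, hEv⟩, fun x hx => ?_⟩
        rcases (hmemDW _).mp hx with h2 | ⟨h2, h2a, h2b⟩
        · rw [show g.1 = a from pfst h1]
          exact pfst h2
        · exact absurd (by rw [← show g.2 = b from psnd h1]; exact h2b : b ∈ compW) hbW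
      · have hg2a : g.2 ≠ a := by
          intro hh
          exact hEv.2 b (by rw [hh]; exact habDW)
        have hEvD : D.isEVert g.2 := by
          refine ⟨(hD.mem_verts h1).2, fun y hy => ?_⟩
          have hne : (g.2, y) ≠ (a, d) := fun hh => hg2a (pfst hh)
          have hyW : y ∈ compW := hclW g.2 y h1b (Or.inl ((hD'edges _).mpr ⟨hy, hne⟩))
          exact hEv.2 y ((hmemDW _).mpr (Or.inr ⟨hy, h1b, hyW⟩))
        have hfe := hWE.2 g ⟨h1, hEvD⟩
        refine ⟨⟨hg, hEv⟩, fun x hx => ?_⟩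
        rcases (hmemDW _).mp hx with h2 | ⟨h2, _, _⟩
        · exact absurd (by rw [← show g.2 = b from psnd h2]; exact h1b : b ∈ compW) hbW
        · exact hfe.2 x h2
  -- DE is a Q-graph
  have hQE : IsQGraph DE := by
    refine ⟨⟨?_, ?_, ?_, ⟨d, (hvertDE d).mpr (Or.inr hdE)⟩⟩, ?_, ?_, ⟨?_, ?_⟩,
      d, (hvertDE d).mpr (Or.inr hdE), ⟨c, hcdDE⟩, ⟨zd, hzdDE⟩⟩
    · intro g hg
      rcases (hmemDE g).mp hg with rfl | ⟨hg', h1, h2⟩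
      · exact ⟨(hvertDE c).mpr (Or.inl rfl), (hvertDE d).mpr (Or.inr hdE)⟩
      · exact ⟨(hvertDE _).mpr (Or.inr h1), (hvertDE _).mpr (Or.inr h2)⟩
    · intro g hg
      rcases (hmemDE g).mp hg with rfl | ⟨hg', _, _⟩
      · exact hcdne'
      · exact hD.2.1 g hg'
    · intro x y hxy hyx
      rcases (hmemDE _).mp hxy with h1 | ⟨h1, h1a, h1b⟩ <;>
        rcases (hmemDE _).mp hyx with h2 | ⟨h2, h2a, h2b⟩
      · exact hcdne' ((pfst h1).symm.trans (psnd h2))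
      · refine hcE ?_
        have hxc : x = c := pfst h1
        rw [← hxc]; exact h2b
      · refine hcE ?_
        have hyc : y = c := pfst h2
        rw [← hyc]; exact h1b
      · exact hD.2.2.1 x y h1 h2
    · -- weakly connected
      intro u hu v hv
      rcases (hvertDE u).mp hu with rfl | hu' <;> rcases (hvertDE v).mp hv with rfl | hv'
      · exact reach_refl hu
      · exact reach_trans hreachCD (hreachDE d v hdE hv')
      · exact reach_trans (hreachDE u d hu' hdE) (reach_symm hreachCD)
      · exact hreachDE u v hu' hv'
    · -- asemicyclic
      rintro l ⟨hlen, hmem, hhg, hndp, hch⟩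
      by_cases hcl : c ∈ l
      · have hx2 : ∃ x ∈ l, x ≠ c := by
          match l, hlen, hndp with
          | x1 :: x2 :: x3 :: x4 :: t, _, hndp =>
            have h12 : x1 ≠ x2 := by
              have heq : (x1 :: x2 :: x3 :: x4 :: t).dropLast
                  = x1 :: x2 :: x3 :: (x4 :: t).dropLast := by simp
              rw [heq] at hndp
              simp [List.nodup_cons] at hndp
              tauto
            by_cases h1c : x1 = c
            · exact ⟨x2, by simp, fun hh => h12 (h1c.trans hh.symm)⟩
            · exact ⟨x1, by simp, h1c⟩
        obtain ⟨x0, hx0l, hx0⟩ := hx2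
        refine no_bridge (R := DE.semiAdj) (P := fun x => x ≠ c) (A := d) (D0 := c)
          (fun u v h => DG.semiAdj_symm h) ?_ hlen hhg hndp hch ⟨x0, hx0l, hx0⟩
          ⟨c, hcl, by simp⟩
        intro u v huv hu hv
        have hvc : v = c := not_not.mp hv
        subst hvc
        rcases huv with h | h
        · rcases (hmemDE _).mp h with h1 | ⟨h1', h1a, h1b⟩
          · exact absurd (psnd h1) hcdne'
          · exact absurd h1b hcE
        · rcases (hmemDE _).mp h with h1 | ⟨h1', h1a, h1b⟩
          · exact ⟨psnd h1, rfl⟩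
          · exact absurd h1a hcE
      · refine hAC l ⟨hlen, ?_, hhg, hndp, ?_⟩
        · intro x hx
          rcases (hvertDE x).mp (hmem x hx) with rfl | h
          · exact absurd hx hcl
          · exact hEsub h
        · refine chain'_imp_mem hch ?_
          intro x hx y hy hxy
          rcases hxy with h | h
          · rcases (hmemDE _).mp h with h1 | ⟨h1, _, _⟩
            · exact absurd (by rw [← show x = c from pfst h1]; exact hx : c ∈ l) hcl
            · exact Or.inl h1
          · rcases (hmemDE _).mp h with h1 | ⟨h1, _, _⟩
            · exact absurd (by rw [← show y = c from pfst h1]; exact hy : c ∈ l) hcl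
            · exact Or.inr h1
    · -- functional W-edges
      rintro g ⟨hg, hWv⟩
      rcases (hmemDE g).mp hg with h1 | ⟨h1, h1a, h1b⟩
      · refine ⟨⟨hg, hWv⟩, fun y hy => ?_⟩
        rcases (hmemDE _).mp hy with h2 | ⟨h2, h2a, h2b⟩
        · rw [show g.2 = d from psnd h1]
          exact psnd h2
        · exact absurd (by rw [← show g.1 = c from pfst h1]; exact h2a : c ∈ compE) hcE
      · have hg1d : g.1 ≠ d := by
          intro hh
          exact hWv.2 c (by rw [hh]; exact hcdDE)
        have hWvD : D.isWVert g.1 := by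
          refine ⟨(hD.mem_verts h1).1, fun x hx => ?_⟩
          have hne : (x, g.1) ≠ (a, d) := fun hh => hg1d (psnd hh)
          have hxE : x ∈ compE := hclE g.1 x h1a (Or.inr ((hD'edges _).mpr ⟨hx, hne⟩))
          exact hWv.2 x ((hmemDE _).mpr (Or.inr ⟨hx, hxE, h1a⟩))
        have hfw := hWE.1 g ⟨h1, hWvD⟩
        refine ⟨⟨hg, hWv⟩, fun c' hc' => ?_⟩
        rcases (hmemDE _).mp hc' with h2 | ⟨h2, _, _⟩
        · exact absurd (by rw [← show g.1 = c from pfst h2]; exact h1a : c ∈ compE) hcE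
        · exact hfw.2 c' h2
    · -- functional E-edges
      rintro g ⟨hg, hEv⟩
      rcases (hmemDE g).mp hg with h1 | ⟨h1, h1a, h1b⟩
      · exact absurd (by rw [show g.2 = d from psnd h1]; exact hzdDE : (g.2, zd) ∈ DE.edges)
          (fun hh => hEv.2 zd hh)
      · have hg2a : g.2 ≠ a := fun hh => hdisjWE a haW (by rw [← hh]; exact h1b)
        have hEvD : D.isEVert g.2 := by
          refine ⟨(hD.mem_verts h1).2, fun y hy => ?_⟩
          have hne : (g.2, y) ≠ (a, d) := fun hh => hg2a (pfst hh)
          have hyE : y ∈ compE := hclE g.2 y h1b (Or.inl ((hD'edges _).mpr ⟨hy, hne⟩))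
          exact hEv.2 y ((hmemDE _).mpr (Or.inr ⟨hy, h1b, hyE⟩))
        have hg2d : g.2 ≠ d := fun hh => hEvD.2 zd (by rw [hh]; exact hzd)
        have hfe := hWE.2 g ⟨h1, hEvD⟩
        refine ⟨⟨hg, hEv⟩, fun x hx => ?_⟩
        rcases (hmemDE _).mp hx with h2 | ⟨h2, _, _⟩
        · exact absurd (psnd h2) hg2d
        · exact hfe.2 x h2
  -- disjointness
  have hdisjF : Disjoint DW.verts DE.verts := by
    rw [Finset.disjoint_left]
    intro x hx hy
    rcases (hvertDW x).mp hx with rfl | hxW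
    · rcases (hvertDE b).mp hy with h | h
      · exact hbc h
      · exact hbV (hEsub h)
    · rcases (hvertDE x).mp hy with rfl | h
      · exact hcV (hWsub hxW)
      · exact hdisjWE x hxW h
  -- the distinguished functional edges
  have hfeAB : DW.funcEEdge (a, b) := by
    refine ⟨⟨habDW, (hvertDW b).mpr (Or.inl rfl), fun y hy => ?_⟩, fun x hx => ?_⟩
    · rcases (hmemDW _).mp hy with h2 | ⟨h2, h2a, h2b⟩
      · exact habne (pfst h2).symm
      · exact hbW h2a
    · rcases (hmemDW _).mp hx with h2 | ⟨h2, h2a, h2b⟩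
      · exact pfst h2
      · exact absurd h2b hbW
  have hfwCD : DE.funcWEdge (c, d) := by
    refine ⟨⟨hcdDE, (hvertDE c).mpr (Or.inl rfl), fun y hy => ?_⟩, fun x hx => ?_⟩
    · rcases (hmemDE _).mp hy with h2 | ⟨h2, h2a, h2b⟩
      · exact hcdne' (psnd h2)
      · exact hcE h2b
    · rcases (hmemDE _).mp hx with h2 | ⟨h2, h2a, h2b⟩
      · exact psnd h2
      · exact absurd h2a hcE
  -- the cut equation
  have hcutEq : D = DG.cut DW DE (a, b) (c, d) := by
    refine (DG.ext' ?_ ?_).symm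
    · ext v
      simp only [DG.cut, Finset.mem_sdiff, Finset.mem_union, Finset.mem_insert,
        Finset.mem_singleton, hDW, hDE]
      constructor
      · rintro ⟨h1, h2⟩
        rcases h1 with (rfl | h) | (rfl | h)
        · exact absurd (Or.inl rfl) h2
        · exact hWsub h
        · exact absurd (Or.inr rfl) h2
        · exact hEsub h
      · intro hv
        refine ⟨?_, ?_⟩
        · rcases hunion v hv with h | h
          · exact Or.inl (Or.inr h)
          · exact Or.inr (Or.inr h)
        · rintro (rfl | rfl)
          · exact hbV hv
          · exact hcV hv
    · ext g
      simp only [DG.cut, Finset.mem_insert, Finset.mem_union, Finset.mem_erase, hDW, hDE]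
      constructor
      · rintro (rfl | ⟨hne, hg⟩ | ⟨hne, hg⟩)
        · exact had
        · rcases hg with h1 | h1
          · exact absurd h1 hne
          · exact (Finset.mem_filter.mp h1).1
        · rcases hg with h1 | h1
          · exact absurd h1 hne
          · exact (Finset.mem_filter.mp h1).1
      · intro hg
        by_cases hgad : g = (a, d)
        · exact Or.inl hgad
        · rcases hedge_side g hg hgad with h | h
          · refine Or.inr (Or.inl ⟨fun hh => hbV ?_,
              Or.inr (Finset.mem_filter.mpr ⟨hg, h.1, h.2⟩)⟩)
            rw [← show g.2 = b from psnd hh]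
            exact (hD.mem_verts hg).2
          · refine Or.inr (Or.inr ⟨fun hh => hcV ?_,
              Or.inr (Finset.mem_filter.mpr ⟨hg, h.1, h.2⟩)⟩)
            rw [← show g.1 = c from pfst hh]
            exact (hD.mem_verts hg).1
  -- cardinalities
  have hzdv : zd ∈ D.verts := (hD.mem_verts hzd).2
  have hxav : xa ∈ D.verts := (hD.mem_verts hxa).1
  have hdzd : d ≠ zd := hD.2.1 _ hzd
  have hxaa : xa ≠ a := hD.2.1 _ hxa
  have hcardW : DW.verts.card < D.verts.card := by
    have h1 : DW.verts.card = compW.card + 1 := by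
      rw [hDW]
      exact Finset.card_insert_of_notMem hbW
    have hsub : compW ⊆ (D.verts.erase d).erase zd := by
      intro v hv
      rw [Finset.mem_erase, Finset.mem_erase]
      exact ⟨fun h => hdisjWE v hv (by rw [h]; exact hzdE.2),
        fun h => hdisjWE v hv (by rw [h]; exact hdE), hWsub hv⟩
    have h2 := Finset.card_le_card hsub
    have h3 : (D.verts.erase d).card = D.verts.card - 1 :=
      Finset.card_erase_of_mem hd.1
    have h4 : ((D.verts.erase d).erase zd).card = (D.verts.erase d).card - 1 :=
      Finset.card_erase_of_mem (Finset.mem_erase.mpr ⟨Ne.symm hdzd, hzdv⟩)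
    have h5 : 0 < (D.verts.erase d).card :=
      Finset.card_pos.mpr ⟨zd, Finset.mem_erase.mpr ⟨Ne.symm hdzd, hzdv⟩⟩
    have h6 : 0 < D.verts.card := Finset.card_pos.mpr ⟨d, hd.1⟩
    omega
  have hcardE : DE.verts.card < D.verts.card := by
    have h1 : DE.verts.card = compE.card + 1 := by
      rw [hDE]
      exact Finset.card_insert_of_notMem hcE
    have hsub : compE ⊆ (D.verts.erase a).erase xa := by
      intro v hv
      rw [Finset.mem_erase, Finset.mem_erase]
      exact ⟨fun h => hdisjWE v (by rw [h]; exact hxaW.1) hv,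
        fun h => hdisjWE v (by rw [h]; exact haW) hv, hEsub hv⟩
    have h2 := Finset.card_le_card hsub
    have h3 : (D.verts.erase a).card = D.verts.card - 1 :=
      Finset.card_erase_of_mem ha.1
    have h4 : ((D.verts.erase a).erase xa).card = (D.verts.erase a).card - 1 :=
      Finset.card_erase_of_mem (Finset.mem_erase.mpr ⟨hxaa, hxav⟩)
    have h5 : 0 < (D.verts.erase a).card :=
      Finset.card_pos.mpr ⟨xa, Finset.mem_erase.mpr ⟨hxaa, hxav⟩⟩
    have h6 : 0 < D.verts.card := Finset.card_pos.mpr ⟨a, ha.1⟩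
    omega
  -- transfers of functional edges
  have htransE : ∀ e, D.funcEEdge e → DW.funcEEdge e ∨ DE.funcEEdge e := by
    intro e he
    have heD : e ∈ D.edges := he.1.1
    have he2d : e.2 ≠ d := fun hh => he.1.2.2 zd (by rw [hh]; exact hzd)
    have hene : e ≠ (a, d) := fun hh => he2d (psnd hh)
    have he2a : e.2 ≠ a := fun hh => he.1.2.2 d (by rw [hh]; exact had)
    rcases hedge_side e heD hene with hside | hside
    · left
      refine ⟨⟨(hmemDW e).mpr (Or.inr ⟨heD, hside.1, hside.2⟩),
        (hvertDW e.2).mpr (Or.inr hside.2), fun y hy => ?_⟩, fun x hx => ?_⟩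
      · rcases (hmemDW _).mp hy with h2 | ⟨h2, -, -⟩
        · exact he2a (pfst h2)
        · exact he.1.2.2 y h2
      · rcases (hmemDW _).mp hx with h2 | ⟨h2, -, -⟩
        · exact absurd (by rw [← show e.2 = b from psnd h2]; exact hside.2 : b ∈ compW) hbW
        · exact he.2 x h2
    · right
      refine ⟨⟨(hmemDE e).mpr (Or.inr ⟨heD, hside.1, hside.2⟩),
        (hvertDE e.2).mpr (Or.inr hside.2), fun y hy => ?_⟩, fun x hx => ?_⟩
      · rcases (hmemDE _).mp hy with h2 | ⟨h2, -, -⟩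
        · exact hcV (by rw [← show e.2 = c from pfst h2]; exact hEsub hside.2)
        · exact he.1.2.2 y h2
      · rcases (hmemDE _).mp hx with h2 | ⟨h2, -, -⟩
        · exact absurd (psnd h2) he2d
        · exact he.2 x h2
  have htransW : ∀ w, D.funcWEdge w → DW.funcWEdge w ∨ DE.funcWEdge w := by
    intro w hw
    have hwD : w ∈ D.edges := hw.1.1
    have hw1a : w.1 ≠ a := fun hh => hw.1.2.2 xa (by rw [hh]; exact hxa)
    have hwne : w ≠ (a, d) := fun hh => hw1a (pfst hh)
    have hw1d : w.1 ≠ d := fun hh => hw.1.2.2 a (by rw [hh]; exact had)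
    rcases hedge_side w hwD hwne with hside | hside
    · left
      refine ⟨⟨(hmemDW w).mpr (Or.inr ⟨hwD, hside.1, hside.2⟩),
        (hvertDW w.1).mpr (Or.inr hside.1), fun x hx => ?_⟩, fun y hy => ?_⟩
      · rcases (hmemDW _).mp hx with h2 | ⟨h2, -, -⟩
        · exact hbV (by rw [← show w.1 = b from psnd h2]; exact hWsub hside.1)
        · exact hw.1.2.2 x h2
      · rcases (hmemDW _).mp hy with h2 | ⟨h2, -, -⟩
        · exact absurd (pfst h2) hw1a
        · exact hw.2 y h2
    · right
      refine ⟨⟨(hmemDE w).mpr (Or.inr ⟨hwD, hside.1, hside.2⟩),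
        (hvertDE w.1).mpr (Or.inr hside.1), fun x hx => ?_⟩, fun y hy => ?_⟩
      · rcases (hmemDE _).mp hx with h2 | ⟨h2, -, -⟩
        · exact absurd (psnd h2) hw1d
        · exact hw.1.2.2 x h2
      · rcases (hmemDE _).mp hy with h2 | ⟨h2, -, -⟩
        · exact absurd (by rw [← show w.1 = c from pfst h2]; exact hEsub hside.1 : c ∈ D.verts)
            hcV
        · exact hw.2 y h2
  exact ⟨DW, DE, b, c, hQW, hQE, hdisjF, hfeAB, hfwCD, hcutEq, hcardW, hcardE,
    hbV, hcV, htransE, htransW⟩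

/-! ### Building constructions with prescribed distinguished edges -/

lemma buildQ : ∀ N (D : DG), D.verts.card < N → IsQGraph D →
    (∀ e, D.funcEEdge e → ∃ G, IsConstructionQ G ∧ G.rootGraph = D ∧
      ∀ Y, G.dist Y XDir.E = e) ∧
    (∀ w, D.funcWEdge w → ∃ G, IsConstructionQ G ∧ G.rootGraph = D ∧
      ∀ Y, G.dist Y XDir.W = w) := by
  intro N
  induction N with
  | zero => intro D h; omega
  | succ N ih =>
    intro D hcard hQ
    by_cases hsingle : ∀ p q, D.isInner p → D.isInner q → p = q
    · -- leaf case: a single inner vertex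
      obtain ⟨b0, hb0⟩ := hQ.2.2.2.2
      have htouch : ∀ g ∈ D.edges, g.1 = b0 ∨ g.2 = b0 := by
        intro g hg
        by_contra hcon
        push_neg at hcon
        have hg2E : D.isEVert g.2 := by
          refine ⟨(hQ.1.mem_verts hg).2, fun y hy => ?_⟩
          exact hcon.2 (hsingle g.2 b0 ⟨(hQ.1.mem_verts hg).2, ⟨g.1, hg⟩, ⟨y, hy⟩⟩ hb0)
        exact hcon.1 (hsingle g.1 b0 (eedge_start_inner hQ ⟨hg, hg2E⟩) hb0)
      have hadj : ∀ v ∈ D.verts, v = b0 ∨ (v, b0) ∈ D.edges ∨ (b0, v) ∈ D.edges := by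
        intro v hv
        by_cases hvb : v = b0
        · exact Or.inl hvb
        right
        obtain ⟨l, hl, hh, hg⟩ := hQ.2.1 v hv b0 hb0.1
        match l, hh, hg with
        | [x], hh, hg =>
          simp at hh hg
          exact absurd (hh.symm.trans hg) hvb
        | x :: y :: t, hh, hg =>
          simp at hh
          have hch := hl.2.2.2
          rw [List.chain'_cons] at hch
          rcases hch.1 with h | h
          · rcases htouch _ h with h1 | h1
            · exact absurd (hh.symm.trans h1) hvb
            · exact Or.inl (by rw [← hh, ← h1]; exact h)
          · rcases htouch _ h with h1 | h1
            · exact Or.inr (by rw [← hh, ← h1]; exact h)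
            · exact absurd (hh.symm.trans h1) hvb
      constructor
      · intro e he
        have he1 : e.1 = b0 := hsingle e.1 b0 (eedge_start_inner hQ he.1) hb0
        obtain ⟨xa, hxa⟩ := hb0.2.1
        refine ⟨CTree.leaf D (fun Y X => match X with | XDir.W => (xa, b0) | XDir.E => e),
          IsConstructionQ.leaf D _ ⟨hQ.1, b0, hb0.1, htouch, hadj,
            ⟨xa, hxa⟩, hb0.2.2, fun Y => ⟨hxa, rfl, he.1.1, he1⟩⟩, rfl, fun Y => rfl⟩
      · intro w hw
        have hw2 : w.2 = b0 := hsingle w.2 b0 (wedge_end_inner hQ hw.1) hb0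
        obtain ⟨za, hza⟩ := hb0.2.2
        refine ⟨CTree.leaf D (fun Y X => match X with | XDir.W => w | XDir.E => (b0, za)),
          IsConstructionQ.leaf D _ ⟨hQ.1, b0, hb0.1, htouch, hadj,
            hb0.2.1, ⟨za, hza⟩, fun Y => ⟨hw.1.1, hw2, hza, rfl⟩⟩, rfl, fun Y => rfl⟩
    · -- node case: two distinct inner vertices, split along an inner edge
      push_neg at hsingle
      obtain ⟨p, q, hp, hq, hpq⟩ := hsingle
      obtain ⟨g0, hg0, hg01, hg02⟩ := exists_inner_edge hQ hp hq hpq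
      obtain ⟨DW, DE, b, c, hQW, hQE, hdisjF, hfeAB, hfwCD, hcutEq, hcardW, hcardE, hbV, hcV,
        htransE, htransW⟩ := split_spec hQ (a := g0.1) (d := g0.2) hg0 hg01 hg02
      have ihW := ih DW (by omega) hQW
      have ihE := ih DE (by omega) hQE
      constructor
      · intro e he
        have hene : (g0.1, b) ≠ e := by
          intro hh
          exact hbV (by rw [show b = e.2 from psnd hh]; exact (hQ.1.mem_verts he.1.1).2)
        rcases htransE e he with hside | hside
        · obtain ⟨GW, hGW, hGWroot, hGWdist⟩ := ihW.1 e hside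
          obtain ⟨GE, hGE, hGEroot, hGEdist⟩ := ihE.2 (c, g0.2) hfwCD
          refine ⟨CTree.node D (fun Y X => match X with
              | XDir.W => if (c, g0.2) = GE.dist Y XDir.W then GW.dist Y XDir.W
                  else GE.dist Y XDir.W
              | XDir.E => if (g0.1, b) = GW.dist Y XDir.E then GE.dist Y XDir.E
                  else GW.dist Y XDir.E) (g0.1, b) (c, g0.2) GW GE,
            IsConstructionQ.node _ _ _ _ GW GE hGW hGE
              (by rw [hGWroot, hGEroot]; exact hdisjF)
              (by rw [hGWroot]; exact hfeAB) (by rw [hGEroot]; exact hfwCD)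
              (by rw [hGWroot, hGEroot]; exact hcutEq)
              (fun Y => Or.inr (hGEdist Y).symm) (fun Y => rfl) (fun Y => rfl),
            rfl, ?_⟩
          intro Y
          show (if (g0.1, b) = GW.dist Y XDir.E then GE.dist Y XDir.E
            else GW.dist Y XDir.E) = e
          rw [hGWdist Y, if_neg hene]
        · obtain ⟨GW, hGW, hGWroot, hGWdist⟩ := ihW.1 (g0.1, b) hfeAB
          obtain ⟨GE, hGE, hGEroot, hGEdist⟩ := ihE.1 e hside
          refine ⟨CTree.node D (fun Y X => match X with
              | XDir.W => if (c, g0.2) = GE.dist Y XDir.W then GW.dist Y XDir.W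
                  else GE.dist Y XDir.W
              | XDir.E => if (g0.1, b) = GW.dist Y XDir.E then GE.dist Y XDir.E
                  else GW.dist Y XDir.E) (g0.1, b) (c, g0.2) GW GE,
            IsConstructionQ.node _ _ _ _ GW GE hGW hGE
              (by rw [hGWroot, hGEroot]; exact hdisjF)
              (by rw [hGWroot]; exact hfeAB) (by rw [hGEroot]; exact hfwCD)
              (by rw [hGWroot, hGEroot]; exact hcutEq)
              (fun Y => Or.inl (hGWdist Y).symm) (fun Y => rfl) (fun Y => rfl),
            rfl, ?_⟩
          intro Y
          show (if (g0.1, b) = GW.dist Y XDir.E then GE.dist Y XDir.E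
            else GW.dist Y XDir.E) = e
          rw [hGWdist Y, if_pos rfl, hGEdist Y]
      · intro w hw
        have hwne : (c, g0.2) ≠ w := by
          intro hh
          exact hcV (by rw [show c = w.1 from pfst hh]; exact (hQ.1.mem_verts hw.1.1).1)
        rcases htransW w hw with hside | hside
        · obtain ⟨GW, hGW, hGWroot, hGWdist⟩ := ihW.2 w hside
          obtain ⟨GE, hGE, hGEroot, hGEdist⟩ := ihE.2 (c, g0.2) hfwCD
          refine ⟨CTree.node D (fun Y X => match X with
              | XDir.W => if (c, g0.2) = GE.dist Y XDir.W then GW.dist Y XDir.W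
                  else GE.dist Y XDir.W
              | XDir.E => if (g0.1, b) = GW.dist Y XDir.E then GE.dist Y XDir.E
                  else GW.dist Y XDir.E) (g0.1, b) (c, g0.2) GW GE,
            IsConstructionQ.node _ _ _ _ GW GE hGW hGE
              (by rw [hGWroot, hGEroot]; exact hdisjF)
              (by rw [hGWroot]; exact hfeAB) (by rw [hGEroot]; exact hfwCD)
              (by rw [hGWroot, hGEroot]; exact hcutEq)
              (fun Y => Or.inr (hGEdist Y).symm) (fun Y => rfl) (fun Y => rfl),
            rfl, ?_⟩
          intro Y
          show (if (c, g0.2) = GE.dist Y XDir.W then GW.dist Y XDir.W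
            else GE.dist Y XDir.W) = w
          rw [hGEdist Y, if_pos rfl, hGWdist Y]
        · obtain ⟨GW, hGW, hGWroot, hGWdist⟩ := ihW.1 (g0.1, b) hfeAB
          obtain ⟨GE, hGE, hGEroot, hGEdist⟩ := ihE.2 w hside
          refine ⟨CTree.node D (fun Y X => match X with
              | XDir.W => if (c, g0.2) = GE.dist Y XDir.W then GW.dist Y XDir.W
                  else GE.dist Y XDir.W
              | XDir.E => if (g0.1, b) = GW.dist Y XDir.E then GE.dist Y XDir.E
                  else GW.dist Y XDir.E) (g0.1, b) (c, g0.2) GW GE,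
            IsConstructionQ.node _ _ _ _ GW GE hGW hGE
              (by rw [hGWroot, hGEroot]; exact hdisjF)
              (by rw [hGWroot]; exact hfeAB) (by rw [hGEroot]; exact hfwCD)
              (by rw [hGWroot, hGEroot]; exact hcutEq)
              (fun Y => Or.inl (hGWdist Y).symm) (fun Y => rfl) (fun Y => rfl),
            rfl, ?_⟩
          intro Y
          show (if (c, g0.2) = GE.dist Y XDir.W then GW.dist Y XDir.W
            else GE.dist Y XDir.W) = w
          rw [hGEdist Y, if_neg hwne]

/-- An oriented graph is a Q-graph iff it is a global Q-graph. -/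
theorem Q_iff_globalQ (D : DG) (hD : D.IsOriented) :
    IsQGraph D ↔ ∃ G : CTree, IsConstructionQ G ∧ G.rootGraph = D := by
  constructor
  · intro hQ
    obtain ⟨e, he⟩ := exists_funcEEdge hQ
    obtain ⟨G, hG, hroot, -⟩ := (buildQ (D.verts.card + 1) D (by omega) hQ).1 e he
    exact ⟨G, hG, hroot⟩
  · rintro ⟨G, hG, rfl⟩
    exact constructionQ_isQ hG
end PluralCuts
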